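/- arXiv:1601.03817 — 7 statements merged into one kernel-verified Lean document; each statement's English description precedes it below -/
import Mathlib

section
/- If x ∈ ℝ² is an edge point whose unique tie is {i,j}, then code(x)_i = code(x)_j = z + 1/2 for some integer z with 0 ≤ z ≤ n−2, and the restriction of code(x) to {1,…,n}∖{i,j} is a bijection onto {0,1,…,n−1} ∖ {z, z+1}. -/
noncomputable section

open Metric

abbrev Pt : Type := EuclideanSpace ℝ (Fin 2)

/-- The chromatic code of a point `x` with respect to generators `p`:
`code p x i` = #{j ≠ i : dist(x,p j) > dist(x,p i)} + (1/2)·#{j ≠ i : dist(x,p j) = dist(x,p i)}. -/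
def code {n : ℕ} (p : Fin n → Pt) (x : Pt) (i : Fin n) : ℚ :=
  (Set.ncard {j : Fin n | j ≠ i ∧ dist x (p i) < dist x (p j)} : ℚ)
  + (1/2) * (Set.ncard {j : Fin n | j ≠ i ∧ dist x (p j) = dist x (p i)} : ℚ)

/-- `{i,j}` is a tie of `x`. -/
def Tie {n : ℕ} (p : Fin n → Pt) (x : Pt) (i j : Fin n) : Prop :=
  i ≠ j ∧ dist x (p i) = dist x (p j)

/-- A cell point has no ties. -/
def CellPoint {n : ℕ} (p : Fin n → Pt) (x : Pt) : Prop :=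
  ∀ i j, ¬ Tie p x i j

/-- An edge point has exactly one (unordered) tie. -/
def EdgePoint {n : ℕ} (p : Fin n → Pt) (x : Pt) : Prop :=
  ∃ i j, Tie p x i j ∧ ∀ u v, Tie p x u v → ({u, v} : Set (Fin n)) = {i, j}

/-- A 2-I vertex point has exactly two ties, forming two disjoint pairs. -/
def Vertex2I {n : ℕ} (p : Fin n → Pt) (x : Pt) : Prop :=
  ∃ i j u v : Fin n, i ≠ j ∧ i ≠ u ∧ i ≠ v ∧ j ≠ u ∧ j ≠ v ∧ u ≠ v ∧
    Tie p x i j ∧ Tie p x u v ∧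
    ∀ a b, Tie p x a b → ({a, b} : Set (Fin n)) = {i, j} ∨ ({a, b} : Set (Fin n)) = {u, v}

/-- A 3-I vertex point: its ties are exactly the three pairs contained in some
3-element subset `{i,j,k}`. -/
def Vertex3I {n : ℕ} (p : Fin n → Pt) (x : Pt) : Prop :=
  ∃ i j k : Fin n, i ≠ j ∧ i ≠ k ∧ j ≠ k ∧
    ∀ a b, Tie p x a b ↔
      (a ≠ b ∧ a ∈ ({i, j, k} : Set (Fin n)) ∧ b ∈ ({i, j, k} : Set (Fin n)))

/-- The chromatic distance between two points. -/
def chromDist {n : ℕ} (p : Fin n → Pt) (x y : Pt) : ℚ :=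
  ∑ i, |code p x i - code p y i|

/-- The spatial particle of `x`: the fiber of the chromatic code through `x`. -/
def particle {n : ℕ} (p : Fin n → Pt) (x : Pt) : Set Pt :=
  {y | code p y = code p x}

/-- The generators are in general position: every point of the plane is one of the four
particle types, and perpendicular bisectors of distinct pairs are distinct non-parallel
lines (any two of them meet in exactly one point). -/
def GeneralPosition {n : ℕ} (p : Fin n → Pt) : Prop :=
  (∀ x : Pt, CellPoint p x ∨ EdgePoint p x ∨ Vertex2I p x ∨ Vertex3I p x) ∧
  (∀ i j u v : Fin n, i ≠ j → u ≠ v → ({i, j} : Set (Fin n)) ≠ {u, v} →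
    ∃! x : Pt, dist x (p i) = dist x (p j) ∧ dist x (p u) = dist x (p v))

/-- The set `{0,1,…,n−1}` viewed inside `ℚ`. -/
def codeRange (n : ℕ) : Set ℚ := {q | ∃ m : ℕ, m < n ∧ q = m}

/-- an edge point with unique tie `{i,j}` has `code(x)_i = code(x)_j = z + 1/2`
for some `0 ≤ z ≤ n−2`, and the restriction of the code to the remaining indices is a
bijection onto `{0,…,n−1} ∖ {z, z+1}`. -/
theorem edge_code_base {n : ℕ} (hn : 2 ≤ n) (p : Fin n → Pt)
    (hp : Function.Injective p) (x : Pt) (i j : Fin n)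
    (htie : Tie p x i j)
    (huniq : ∀ u v, Tie p x u v → ({u, v} : Set (Fin n)) = {i, j}) :
    ∃ z : ℕ, z ≤ n - 2 ∧
      code p x i = (z : ℚ) + 1/2 ∧ code p x j = (z : ℚ) + 1/2 ∧
      Set.BijOn (code p x) {k : Fin n | k ≠ i ∧ k ≠ j}
        (codeRange n \ {(z : ℚ), (z : ℚ) + 1}) := by
  classical
  obtain ⟨hij, hdij⟩ := htie
  set D : Fin n → ℝ := fun k => dist x (p k) with hD
  have hDij : D i = D j := hdij
  -- distinctness outside the tie
  have hdist : ∀ u v : Fin n, u ≠ v → D u = D v →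
      (u = i ∧ v = j) ∨ (u = j ∧ v = i) := by
    intro u v huv h
    have hset := huniq u v ⟨huv, h⟩
    have hu : u ∈ ({i, j} : Set (Fin n)) := by
      rw [← hset]; exact Set.mem_insert _ _
    have hv : v ∈ ({i, j} : Set (Fin n)) := by
      rw [← hset]; exact Set.mem_insert_of_mem _ rfl
    rcases hu with rfl | hu
    · rcases hv with rfl | hv
      · exact absurd rfl huv
      · exact Or.inl ⟨rfl, hv⟩
    · rcases hv with rfl | hv
      · exact Or.inr ⟨hu, rfl⟩
      · rw [Set.mem_singleton_iff] at hu hv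
        exact absurd (hu.trans hv.symm) huv
  -- rank sets
  set A : Fin n → Finset (Fin n) := fun k => Finset.univ.filter (fun l => D k < D l) with hA
  have memA : ∀ k l, l ∈ A k ↔ D k < D l := by
    intro k l; simp [hA]
  -- rewrite code
  have hcode : ∀ k, code p x k = ((A k).card : ℚ)
      + (1/2) * ((Set.ncard {l : Fin n | l ≠ k ∧ D l = D k}) : ℚ) := by
    intro k
    unfold code
    congr 2
    rw [← Set.ncard_coe_finset (A k)]
    congr 1
    ext l
    simp only [Set.mem_setOf_eq, Finset.coe_filter, Finset.mem_univ, true_and, hA]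
    constructor
    · rintro ⟨-, h⟩; exact h
    · intro h; exact ⟨fun e => by subst e; exact lt_irrefl _ h, h⟩
  -- tie sets
  have hEi : {l : Fin n | l ≠ i ∧ D l = D i} = {j} := by
    ext l
    simp only [Set.mem_setOf_eq, Set.mem_singleton_iff]
    constructor
    · rintro ⟨hl, hdl⟩
      rcases hdist l i hl hdl with ⟨rfl, rfl⟩ | ⟨rfl, -⟩
      · exact absurd rfl hl
      · rfl
    · rintro rfl; exact ⟨Ne.symm hij, hdij.symm⟩
  have hEj : {l : Fin n | l ≠ j ∧ D l = D j} = {i} := by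
    ext l
    simp only [Set.mem_setOf_eq, Set.mem_singleton_iff]
    constructor
    · rintro ⟨hl, hdl⟩
      rcases hdist l j hl hdl with ⟨rfl, -⟩ | ⟨rfl, rfl⟩
      · rfl
      · exact absurd rfl hl
    · rintro rfl; exact ⟨hij, hdij⟩
  have hEk : ∀ k, k ≠ i → k ≠ j → {l : Fin n | l ≠ k ∧ D l = D k} = ∅ := by
    intro k hki hkj
    ext l
    simp only [Set.mem_setOf_eq, Set.mem_empty_iff_false, iff_false, not_and]
    intro hl hdl
    rcases hdist l k hl hdl with ⟨-, rfl⟩ | ⟨-, rfl⟩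
    · exact hkj rfl
    · exact hki rfl
  -- A i = A j
  have hAij : A i = A j := by
    ext l; rw [memA, memA, hDij]
  set z : ℕ := (A i).card with hz
  -- z ≤ n - 2
  have hiA : i ∉ A i := by rw [memA]; exact lt_irrefl _
  have hjA : j ∉ A i := by rw [memA, ← hDij]; exact lt_irrefl _
  have hzle : z ≤ n - 2 := by
    have hsub : A i ⊆ Finset.univ \ {i, j} := by
      intro l hl
      simp only [Finset.mem_sdiff, Finset.mem_univ, true_and, Finset.mem_insert,
        Finset.mem_singleton]
      push_neg
      constructor
      · rintro rfl; exact hiA hl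
      · rintro rfl; exact hjA hl
    have := Finset.card_le_card hsub
    rwa [Finset.card_sdiff_of_subset (Finset.subset_univ _), Finset.card_univ, Fintype.card_fin,
      Finset.card_insert_of_notMem (by simpa using hij), Finset.card_singleton] at this
  -- monotonicity of rank
  have hmono : ∀ k l : Fin n, D k < D l → (A l).card < (A k).card := by
    intro k l h
    apply Finset.card_lt_card
    rw [Finset.ssubset_iff_of_subset]
    · exact ⟨l, (memA k l).2 h, by rw [memA]; exact lt_irrefl _⟩
    · intro m hm
      rw [memA] at hm ⊢
      exact h.trans hm
  -- code values
  have hcodei : code p x i = (z : ℚ) + 1/2 := by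
    rw [hcode i, hEi, hz, Set.ncard_singleton]
    push_cast; ring
  have hcodej : code p x j = (z : ℚ) + 1/2 := by
    rw [hcode j, hEj, ← hAij, hz, Set.ncard_singleton]
    push_cast; ring
  have hcodek : ∀ k, k ≠ i → k ≠ j → code p x k = ((A k).card : ℚ) := by
    intro k hki hkj
    rw [hcode k, hEk k hki hkj, Set.ncard_empty]
    push_cast; ring
  -- rank bounds for k off the tie
  have hrank : ∀ k, k ≠ i → k ≠ j → (A k).card < n ∧ (A k).card ≠ z ∧ (A k).card ≠ z + 1 := by
    intro k hki hkj
    have hkn : (A k).card < n := by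
      have : A k ⊆ Finset.univ \ {k} := by
        intro l hl
        simp only [Finset.mem_sdiff, Finset.mem_univ, true_and, Finset.mem_singleton]
        rintro rfl
        exact absurd ((memA _ _).1 hl) (lt_irrefl _)
      have := Finset.card_le_card this
      rw [Finset.card_sdiff_of_subset (Finset.subset_univ _), Finset.card_univ, Fintype.card_fin,
        Finset.card_singleton] at this
      omega
    have hDki : D k ≠ D i := by
      intro h
      rcases hdist k i hki h with ⟨h1, -⟩ | ⟨h1, -⟩
      · exact hki h1
      · exact hkj h1
    rcases lt_or_gt_of_ne hDki with hlt | hgt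
    · -- D k < D i : rank ≥ z + 2
      have hsub : insert i (insert j (A i)) ⊆ A k := by
        intro m hm
        rw [memA]
        rcases Finset.mem_insert.1 hm with rfl | hm
        · exact hlt
        rcases Finset.mem_insert.1 hm with rfl | hm
        · rw [← hDij]; exact hlt
        · exact hlt.trans ((memA i m).1 hm)
      have hcard : (insert i (insert j (A i))).card = z + 2 := by
        rw [Finset.card_insert_of_notMem, Finset.card_insert_of_notMem hjA, hz]
        simp only [Finset.mem_insert]
        push_neg
        exact ⟨hij, hiA⟩
      have := Finset.card_le_card hsub
      rw [hcard] at this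
      omega
    · -- D i < D k : rank < z
      have := hmono i k hgt
      rw [← hz] at this
      omega
  have hmaps : Set.MapsTo (code p x) {k : Fin n | k ≠ i ∧ k ≠ j}
      (codeRange n \ {(z : ℚ), (z : ℚ) + 1}) := by
    intro k hk
    obtain ⟨hki, hkj⟩ := hk
    obtain ⟨h1, h2, h3⟩ := hrank k hki hkj
    rw [hcodek k hki hkj]
    constructor
    · exact ⟨(A k).card, h1, rfl⟩
    · simp only [Set.mem_insert_iff, Set.mem_singleton_iff]
      push_neg
      constructor
      · exact_mod_cast h2
      · rw [show ((z : ℚ) + 1) = ((z + 1 : ℕ) : ℚ) by push_cast; ring]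
        exact_mod_cast h3
  have hinj : Set.InjOn (code p x) {k : Fin n | k ≠ i ∧ k ≠ j} := by
    intro k hk l hl hkl
    obtain ⟨hki, hkj⟩ := hk
    obtain ⟨hli, hlj⟩ := hl
    rw [hcodek k hki hkj, hcodek l hli hlj] at hkl
    have hcard : (A k).card = (A l).card := by exact_mod_cast hkl
    by_contra hne
    have hDkl : D k ≠ D l := by
      intro h
      rcases hdist k l hne h with ⟨h1, -⟩ | ⟨h1, -⟩
      · exact hki h1
      · exact hkj h1
    rcases lt_or_gt_of_ne hDkl with h | h
    · exact absurd hcard.symm (Nat.ne_of_lt (hmono k l h))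
    · exact absurd hcard (Nat.ne_of_lt (hmono l k h))
  have hSncard : ({k : Fin n | k ≠ i ∧ k ≠ j} : Set (Fin n)).ncard = n - 2 := by
    have : ({k : Fin n | k ≠ i ∧ k ≠ j} : Set (Fin n)) =
        ↑(Finset.univ \ {i, j}) := by
      ext k
      simp only [Set.mem_setOf_eq, Finset.coe_sdiff, Finset.coe_univ, Set.mem_diff,
        Set.mem_univ, true_and, Finset.coe_insert, Finset.coe_singleton,
        Set.mem_insert_iff, Set.mem_singleton_iff]
      push_neg
      rfl
    rw [this, Set.ncard_coe_finset, Finset.card_sdiff_of_subset (Finset.subset_univ _),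
      Finset.card_univ, Fintype.card_fin,
      Finset.card_insert_of_notMem (by simpa using hij), Finset.card_singleton]
  have hCReq : codeRange n = ↑((Finset.range n).image (Nat.cast : ℕ → ℚ)) := by
    ext q
    simp only [codeRange, Set.mem_setOf_eq, Finset.coe_image, Finset.coe_range,
      Set.mem_image, Set.mem_Iio]
    constructor
    · rintro ⟨m, hm, rfl⟩; exact ⟨m, hm, rfl⟩
    · rintro ⟨m, hm, rfl⟩; exact ⟨m, hm, rfl⟩
  have hCRfin : (codeRange n).Finite := by
    rw [hCReq]; exact Finset.finite_toSet _
  have hCRncard : (codeRange n).ncard = n := by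
    rw [hCReq, Set.ncard_coe_finset,
      Finset.card_image_of_injective _ Nat.cast_injective, Finset.card_range]
  have hTsub : ({(z : ℚ), (z : ℚ) + 1} : Set ℚ) ⊆ codeRange n := by
    intro q hq
    rcases hq with rfl | hq
    · exact ⟨z, by omega, rfl⟩
    · rw [Set.mem_singleton_iff] at hq
      subst hq
      exact ⟨z + 1, by omega, by push_cast; ring⟩
  have hTfin : ((codeRange n) \ {(z : ℚ), (z : ℚ) + 1}).Finite :=
    hCRfin.diff
  have hTncard : ((codeRange n) \ {(z : ℚ), (z : ℚ) + 1}).ncard = n - 2 := by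
    rw [Set.ncard_diff hTsub, hCRncard,
      Set.ncard_pair (by norm_num : (z : ℚ) ≠ (z : ℚ) + 1)]
  have himg : code p x '' {k : Fin n | k ≠ i ∧ k ≠ j}
      = codeRange n \ {(z : ℚ), (z : ℚ) + 1} := by
    apply Set.eq_of_subset_of_ncard_le hmaps.image_subset _ hTfin
    rw [Set.ncard_image_of_injOn hinj, hSncard, hTncard]
  exact ⟨z, hzle, hcodei, hcodej, hmaps, hinj, himg.ge⟩
end
end

section
/- If x ∈ ℝ² is a 2-I vertex point with ties {i,j} and {u,v} (so i,j,u,v are pairwise distinct), then there exist integers z₁, z₂ with 0 ≤ z₁ and z₁ + 2 ≤ z₂ ≤ n−2 such that the two common values code(x)_i = code(x)_j and code(x)_u = code(x)_v are, in some order, z₁ + 1/2 and z₂ + 1/2, and the restriction of code(x) to the remaining n−4 indices is a bijection onto {0,1,…,n−1} ∖ {z₁, z₁+1, z₂, z₂+1}. -/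
noncomputable section

open Metric

section Aux
variable {n : ℕ}

def rk (d : Fin n → ℝ) (k : Fin n) : ℕ :=
  (Finset.univ.filter fun l => d k < d l).card

lemma rk_congr {d : Fin n → ℝ} {k m : Fin n} (h : d k = d m) : rk d k = rk d m := by
  unfold rk; rw [h]

lemma rk_lt_rk {d : Fin n → ℝ} {k m : Fin n} (h : d k < d m) : rk d m < rk d k := by
  apply Finset.card_lt_card
  rw [Finset.ssubset_iff_of_subset]
  · exact ⟨m, by simp [h], by simp⟩
  · intro t ht
    simp only [Finset.mem_filter, Finset.mem_univ, true_and] at *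
    exact h.trans ht

lemma d_eq_of_rk_eq {d : Fin n → ℝ} {k m : Fin n} (h : rk d k = rk d m) : d k = d m := by
  rcases lt_trichotomy (d k) (d m) with hlt | heq | hlt
  · exact absurd h (by have := rk_lt_rk hlt; omega)
  · exact heq
  · exact absurd h (by have := rk_lt_rk hlt; omega)

lemma rk_lt (d : Fin n → ℝ) (k : Fin n) : rk d k < n := by
  have h1 : k ∉ Finset.univ.filter fun l => d k < d l := by simp
  have h2 : (Finset.univ.filter fun l => d k < d l) ≠ Finset.univ := by
    intro hEq; rw [hEq] at h1; exact h1 (Finset.mem_univ k)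
  have := Finset.card_lt_card ((Finset.ssubset_univ_iff).mpr h2)
  simpa [rk] using this

lemma rk_gap {d : Fin n → ℝ} {i j u : Fin n} (hij : i ≠ j) (hdij : d i = d j)
    (h : d u < d i) : rk d i + 2 ≤ rk d u := by
  have hi : i ∉ Finset.univ.filter fun l => d i < d l := by simp
  have hj : j ∉ Finset.univ.filter fun l => d i < d l := by simp [hdij]
  have hsub : insert i (insert j (Finset.univ.filter fun l => d i < d l))
      ⊆ Finset.univ.filter fun l => d u < d l := by
    intro t ht
    simp only [Finset.mem_insert, Finset.mem_filter, Finset.mem_univ, true_and] at *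
    rcases ht with rfl | rfl | ht
    · exact h
    · rw [← hdij]; exact h
    · exact h.trans ht
  have := Finset.card_le_card hsub
  rw [Finset.card_insert_of_notMem (by simp [hij, hi]), Finset.card_insert_of_notMem hj] at this
  unfold rk; omega

lemma rk_le {d : Fin n → ℝ} {u v : Fin n} (huv : u ≠ v) (hduv : d u = d v) :
    rk d u ≤ n - 2 := by
  have hsub : (Finset.univ.filter fun l => d u < d l) ⊆ Finset.univ \ {u, v} := by
    intro t ht
    simp only [Finset.mem_filter, Finset.mem_univ, true_and, Finset.mem_sdiff,
      Finset.mem_insert, Finset.mem_singleton] at *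
    rintro (rfl | rfl)
    · exact lt_irrefl _ ht
    · rw [← hduv] at ht; exact lt_irrefl _ ht
  have := Finset.card_le_card hsub
  rw [Finset.card_sdiff_of_subset (Finset.subset_univ _), Finset.card_univ, Finset.card_pair huv] at this
  simpa [rk, Fintype.card_fin] using this

lemma rk_exists {d : Fin n → ℝ} {m : ℕ} (hm : m < n) :
    ∃ k, rk d k ≤ m ∧ m < (Finset.univ.filter fun l => d k ≤ d l).card := by
  have hnpos : 0 < n := lt_of_le_of_lt (Nat.zero_le m) hm
  have : Nonempty (Fin n) := ⟨⟨0, hnpos⟩⟩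
  obtain ⟨k0, -, hk0⟩ := Finset.exists_max_image Finset.univ d Finset.univ_nonempty
  have hU : (Finset.univ.filter fun k => rk d k ≤ m).Nonempty := by
    refine ⟨k0, ?_⟩
    simp only [Finset.mem_filter, Finset.mem_univ, true_and]
    have : rk d k0 = 0 := by
      unfold rk
      rw [Finset.card_eq_zero, Finset.filter_eq_empty_iff]
      intro l _
      exact not_lt.mpr (hk0 l (Finset.mem_univ l))
    omega
  obtain ⟨k, hkU, hkmin⟩ := Finset.exists_min_image _ d hU
  simp only [Finset.mem_filter, Finset.mem_univ, true_and] at hkU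
  refine ⟨k, hkU, ?_⟩
  by_contra hcon
  push_neg at hcon
  have hsplit : (Finset.univ.filter fun l => d l < d k).card
      + (Finset.univ.filter fun l => d k ≤ d l).card = n := by
    have := Finset.card_filter_add_card_filter_not
      (s := (Finset.univ : Finset (Fin n))) (p := fun l => d l < d k)
    simp only [not_lt, Finset.card_univ, Fintype.card_fin] at this
    exact this
  have hB : (Finset.univ.filter fun l => d l < d k).Nonempty := by
    rw [← Finset.card_pos]; omega
  obtain ⟨l, hlB, hlmax⟩ := Finset.exists_max_image _ d hB
  simp only [Finset.mem_filter, Finset.mem_univ, true_and] at hlB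
  have hrl : rk d l ≤ m := by
    have hsub : (Finset.univ.filter fun t => d l < d t)
        ⊆ Finset.univ.filter fun t => d k ≤ d t := by
      intro t ht
      simp only [Finset.mem_filter, Finset.mem_univ, true_and] at *
      by_contra hnk
      push_neg at hnk
      have : d t ≤ d l := hlmax t (by simp [hnk])
      exact absurd ht (not_lt.mpr this)
    have := Finset.card_le_card hsub
    unfold rk; omega
  have := hkmin l (by simp [hrl])
  exact absurd hlB (not_lt.mpr this)

lemma rank_add_class (d : Fin n → ℝ) (k : Fin n) :
    (Finset.univ.filter fun l => d k ≤ d l).card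
      = rk d k + (Finset.univ.filter fun l => d l = d k).card := by
  classical
  have hpred : (Finset.univ.filter fun l => d k ≤ d l)
      = (Finset.univ.filter fun l => d k < d l ∨ d l = d k) := by
    apply Finset.filter_congr
    intro l _
    constructor
    · intro h; rcases lt_or_eq_of_le h with h | h
      · exact Or.inl h
      · exact Or.inr h.symm
    · rintro (h | h)
      · exact le_of_lt h
      · exact le_of_eq h.symm
  rw [hpred, Finset.filter_or, Finset.card_union_of_disjoint]
  · rfl
  · rw [Finset.disjoint_left]
    intro t ht1 ht2
    simp only [Finset.mem_filter, Finset.mem_univ, true_and] at *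
    rw [ht2] at ht1
    exact lt_irrefl _ ht1

lemma pair_cases {α : Type*} {a b c e : α} (hab : a ≠ b) (h : ({a, b} : Set α) = {c, e}) :
    (a = c ∧ b = e) ∨ (a = e ∧ b = c) := by
  have ha : a ∈ ({c, e} : Set α) := h ▸ (by simp)
  have hb : b ∈ ({c, e} : Set α) := h ▸ (by simp)
  simp only [Set.mem_insert_iff, Set.mem_singleton_iff] at ha hb
  rcases ha with rfl | rfl <;> rcases hb with rfl | rfl <;> tauto

lemma code_eq (p : Fin n → Pt) (x : Pt) (k : Fin n) :
    code p x k = (rk (fun l => dist x (p l)) k : ℚ)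
      + (1/2) * ((Finset.univ.filter fun l => l ≠ k ∧ dist x (p l) = dist x (p k)).card : ℚ) := by
  classical
  have h1 : {j : Fin n | j ≠ k ∧ dist x (p k) < dist x (p j)}
      = ↑(Finset.univ.filter fun l => dist x (p k) < dist x (p l)) := by
    ext t
    simp only [Set.mem_setOf_eq, Finset.coe_filter, Finset.mem_univ, true_and]
    constructor
    · rintro ⟨-, h⟩; exact h
    · intro h
      refine ⟨?_, h⟩
      rintro rfl
      exact lt_irrefl _ h
  have h2 : {j : Fin n | j ≠ k ∧ dist x (p j) = dist x (p k)}
      = ↑(Finset.univ.filter fun l => l ≠ k ∧ dist x (p l) = dist x (p k)) := by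
    ext t; simp
  rw [code, h1, h2, Set.ncard_coe_finset, Set.ncard_coe_finset, rk]

lemma core (d : Fin n → ℝ) (i j u v : Fin n)
    (hij : i ≠ j) (hiu : i ≠ u) (hiv : i ≠ v) (hju : j ≠ u) (hjv : j ≠ v) (huv : u ≠ v)
    (hdij : d i = d j) (hduv : d u = d v) (hlow : d u < d i)
    (hties : ∀ a b : Fin n, a ≠ b → d a = d b →
      (a = i ∧ b = j) ∨ (a = j ∧ b = i) ∨ (a = u ∧ b = v) ∨ (a = v ∧ b = u)) :
    rk d i + 2 ≤ rk d u ∧ rk d u ≤ n - 2 ∧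
    Set.BijOn (fun k => (rk d k : ℚ)) {k : Fin n | k ≠ i ∧ k ≠ j ∧ k ≠ u ∧ k ≠ v}
      (codeRange n \ {(rk d i : ℚ), (rk d i : ℚ) + 1, (rk d u : ℚ), (rk d u : ℚ) + 1}) := by
  classical
  -- equality classes
  have class_i : (Finset.univ.filter fun l => d l = d i) = {i, j} := by
    ext t
    simp only [Finset.mem_filter, Finset.mem_univ, true_and, Finset.mem_insert,
      Finset.mem_singleton]
    constructor
    · intro h
      by_cases hti : t = i
      · exact Or.inl hti
      · rcases hties t i hti h with ⟨h1, h2⟩ | ⟨h1, h2⟩ | ⟨h1, h2⟩ | ⟨h1, h2⟩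
        · exact absurd h1 hti
        · exact Or.inr h1
        · exact absurd h2 hiv
        · exact absurd h2 hiu
    · rintro (rfl | rfl)
      · rfl
      · exact hdij.symm
  have class_u : (Finset.univ.filter fun l => d l = d u) = {u, v} := by
    ext t
    simp only [Finset.mem_filter, Finset.mem_univ, true_and, Finset.mem_insert,
      Finset.mem_singleton]
    constructor
    · intro h
      by_cases htu : t = u
      · exact Or.inl htu
      · rcases hties t u htu h with ⟨h1, h2⟩ | ⟨h1, h2⟩ | ⟨h1, h2⟩ | ⟨h1, h2⟩
        · exact absurd h2.symm hju
        · exact absurd h2.symm hiu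
        · exact absurd h1 htu
        · exact Or.inr h1
    · rintro (rfl | rfl)
      · rfl
      · exact hduv.symm
  have class_single : ∀ k : Fin n, k ≠ i → k ≠ j → k ≠ u → k ≠ v →
      (Finset.univ.filter fun l => d l = d k) = {k} := by
    intro k hki hkj hku hkv
    ext t
    simp only [Finset.mem_filter, Finset.mem_univ, true_and, Finset.mem_singleton]
    constructor
    · intro h
      by_contra htk
      rcases hties t k htk h with ⟨h1, h2⟩ | ⟨h1, h2⟩ | ⟨h1, h2⟩ | ⟨h1, h2⟩
      · exact hkj h2
      · exact hki h2
      · exact hkv h2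
      · exact hku h2
    · rintro rfl; rfl
  -- no singleton rank collides with the pair ranks or their successors
  have hsep : ∀ z k : Fin n, z ≠ k → d z = d k → False → True := fun _ _ _ _ _ => trivial
  have key : ∀ (a b : Fin n), a ≠ b → d a = d b → ∀ k, k ≠ i → k ≠ j → k ≠ u → k ≠ v →
      rk d k ≠ rk d a ∧ rk d k ≠ rk d a + 1 := by
    intro a b hab hdab k hki hkj hku hkv
    have hnk : d k ≠ d a := by
      intro h
      have hka : k ≠ a := by
        rintro rfl
        rcases hties _ b hab hdab with ⟨h1, _⟩ | ⟨h1, _⟩ | ⟨h1, _⟩ | ⟨h1, _⟩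
        · exact hki h1
        · exact hkj h1
        · exact hku h1
        · exact hkv h1
      rcases hties k a hka h with ⟨h1, _⟩ | ⟨h1, _⟩ | ⟨h1, _⟩ | ⟨h1, _⟩
      · exact hki h1
      · exact hkj h1
      · exact hku h1
      · exact hkv h1
    constructor
    · intro h
      exact hnk (d_eq_of_rk_eq h)
    · intro h
      rcases lt_trichotomy (d k) (d a) with hlt | heq | hlt
      · have := rk_gap hab hdab hlt
        omega
      · exact hnk heq
      · have := rk_lt_rk hlt
        omega
  constructor
  · exact rk_gap hij hdij hlow
  constructor
  · exact rk_le huv hduv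
  refine ⟨?_, ?_, ?_⟩
  · -- MapsTo
    rintro k ⟨hki, hkj, hku, hkv⟩
    obtain ⟨hne1, hne2⟩ := key i j hij hdij k hki hkj hku hkv
    obtain ⟨hne3, hne4⟩ := key u v huv hduv k hki hkj hku hkv
    constructor
    · exact ⟨rk d k, rk_lt d k, rfl⟩
    · intro hmem
      simp only [Set.mem_insert_iff, Set.mem_singleton_iff] at hmem
      rcases hmem with h | h | h | h
      · exact hne1 (by exact_mod_cast h)
      · exact hne2 (by exact_mod_cast h)
      · exact hne3 (by exact_mod_cast h)
      · exact hne4 (by exact_mod_cast h)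
  · -- InjOn
    rintro a ⟨hai, haj, hau, hav⟩ b ⟨hbi, hbj, hbu, hbv⟩ hab
    have hr : rk d a = rk d b := by simpa using hab
    have hd : d a = d b := d_eq_of_rk_eq hr
    by_contra hne
    rcases hties a b hne hd with ⟨h1, _⟩ | ⟨h1, _⟩ | ⟨h1, _⟩ | ⟨h1, _⟩
    · exact hai h1
    · exact haj h1
    · exact hau h1
    · exact hav h1
  · -- SurjOn
    rintro q ⟨⟨m, hmn, rfl⟩, hnot⟩
    simp only [Set.mem_insert_iff, Set.mem_singleton_iff, not_or] at hnot
    obtain ⟨hn1, hn2, hn3, hn4⟩ := hnot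
    have hm1 : m ≠ rk d i := fun h => hn1 (by exact_mod_cast h)
    have hm2 : m ≠ rk d i + 1 := fun h => hn2 (by exact_mod_cast h)
    have hm3 : m ≠ rk d u := fun h => hn3 (by exact_mod_cast h)
    have hm4 : m ≠ rk d u + 1 := fun h => hn4 (by exact_mod_cast h)
    obtain ⟨k, hk1, hk2⟩ := rk_exists (d := d) hmn
    rw [rank_add_class] at hk2
    by_cases hki : k = i
    · subst hki
      rw [class_i, Finset.card_pair hij] at hk2
      omega
    by_cases hkj : k = j
    · subst hkj
      have e1 : rk d k = rk d i := rk_congr hdij.symm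
      have e2 : (Finset.univ.filter fun l => d l = d k) = {i, k} := by
        simp only [show d k = d i from hdij.symm]
        exact class_i
      rw [e2, Finset.card_pair hij] at hk2
      omega
    by_cases hku : k = u
    · subst hku
      rw [class_u, Finset.card_pair huv] at hk2
      omega
    by_cases hkv : k = v
    · subst hkv
      have e1 : rk d k = rk d u := rk_congr hduv.symm
      have e2 : (Finset.univ.filter fun l => d l = d k) = {u, k} := by
        simp only [show d k = d u from hduv.symm]
        exact class_u
      rw [e2, Finset.card_pair huv] at hk2
      omega
    · rw [class_single k hki hkj hku hkv, Finset.card_singleton] at hk2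
      have : rk d k = m := by omega
      exact ⟨k, ⟨hki, hkj, hku, hkv⟩, by simp [this]⟩

end Aux

/-- a 2-I vertex point with ties `{i,j}` and `{u,v}` has common values
`z₁ + 1/2` and `z₂ + 1/2` (in some order) with `0 ≤ z₁`, `z₁ + 2 ≤ z₂ ≤ n−2`, and the
restriction of the code to the remaining `n−4` indices is a bijection onto
`{0,…,n−1} ∖ {z₁, z₁+1, z₂, z₂+1}`. -/
theorem vertex2I_code_base {n : ℕ} (hn : 2 ≤ n) (p : Fin n → Pt)
    (hp : Function.Injective p) (x : Pt) (i j u v : Fin n)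
    (hij : i ≠ j) (hiu : i ≠ u) (hiv : i ≠ v) (hju : j ≠ u) (hjv : j ≠ v) (huv : u ≠ v)
    (htie₁ : Tie p x i j) (htie₂ : Tie p x u v)
    (hexact : ∀ a b, Tie p x a b →
      ({a, b} : Set (Fin n)) = {i, j} ∨ ({a, b} : Set (Fin n)) = {u, v}) :
    ∃ z₁ z₂ : ℕ, z₁ + 2 ≤ z₂ ∧ z₂ ≤ n - 2 ∧
      code p x i = code p x j ∧ code p x u = code p x v ∧
      ((code p x i = (z₁ : ℚ) + 1/2 ∧ code p x u = (z₂ : ℚ) + 1/2) ∨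
       (code p x i = (z₂ : ℚ) + 1/2 ∧ code p x u = (z₁ : ℚ) + 1/2)) ∧
      Set.BijOn (code p x) {k : Fin n | k ≠ i ∧ k ≠ j ∧ k ≠ u ∧ k ≠ v}
        (codeRange n \ {(z₁ : ℚ), (z₁ : ℚ) + 1, (z₂ : ℚ), (z₂ : ℚ) + 1}) := by
  classical
  set d : Fin n → ℝ := fun k => dist x (p k) with hd
  have hdij : d i = d j := htie₁.2
  have hduv : d u = d v := htie₂.2
  have hties : ∀ a b : Fin n, a ≠ b → d a = d b →
      (a = i ∧ b = j) ∨ (a = j ∧ b = i) ∨ (a = u ∧ b = v) ∨ (a = v ∧ b = u) := by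
    intro a b hab hdab
    rcases hexact a b ⟨hab, hdab⟩ with h | h
    · rcases pair_cases hab h with h' | h' <;> tauto
    · rcases pair_cases hab h with h' | h' <;> tauto
  -- tie-class filters
  have htf_i : (Finset.univ.filter fun l => l ≠ i ∧ d l = d i) = {j} := by
    ext t
    simp only [Finset.mem_filter, Finset.mem_univ, true_and, Finset.mem_singleton]
    constructor
    · rintro ⟨h1, h2⟩
      rcases hties t i h1 h2 with ⟨ha, hb⟩ | ⟨ha, hb⟩ | ⟨ha, hb⟩ | ⟨ha, hb⟩
      · exact absurd ha h1
      · exact ha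
      · exact absurd hb hiv
      · exact absurd hb hiu
    · rintro rfl; exact ⟨hij.symm, hdij.symm⟩
  have htf_j : (Finset.univ.filter fun l => l ≠ j ∧ d l = d j) = {i} := by
    ext t
    simp only [Finset.mem_filter, Finset.mem_univ, true_and, Finset.mem_singleton]
    constructor
    · rintro ⟨h1, h2⟩
      rcases hties t j h1 h2 with ⟨ha, hb⟩ | ⟨ha, hb⟩ | ⟨ha, hb⟩ | ⟨ha, hb⟩
      · exact ha
      · exact absurd ha h1
      · exact absurd hb hjv
      · exact absurd hb hju
    · rintro rfl; exact ⟨hij, hdij⟩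
  have htf_u : (Finset.univ.filter fun l => l ≠ u ∧ d l = d u) = {v} := by
    ext t
    simp only [Finset.mem_filter, Finset.mem_univ, true_and, Finset.mem_singleton]
    constructor
    · rintro ⟨h1, h2⟩
      rcases hties t u h1 h2 with ⟨ha, hb⟩ | ⟨ha, hb⟩ | ⟨ha, hb⟩ | ⟨ha, hb⟩
      · exact absurd hb.symm hju
      · exact absurd hb.symm hiu
      · exact absurd ha h1
      · exact ha
    · rintro rfl; exact ⟨huv.symm, hduv.symm⟩
  have htf_v : (Finset.univ.filter fun l => l ≠ v ∧ d l = d v) = {u} := by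
    ext t
    simp only [Finset.mem_filter, Finset.mem_univ, true_and, Finset.mem_singleton]
    constructor
    · rintro ⟨h1, h2⟩
      rcases hties t v h1 h2 with ⟨ha, hb⟩ | ⟨ha, hb⟩ | ⟨ha, hb⟩ | ⟨ha, hb⟩
      · exact absurd hb.symm hjv
      · exact absurd hb.symm hiv
      · exact ha
      · exact absurd ha h1
    · rintro rfl; exact ⟨huv, hduv⟩
  have hci : code p x i = (rk d i : ℚ) + 1/2 := by
    rw [code_eq, htf_i]; norm_num; rfl
  have hcj : code p x j = (rk d j : ℚ) + 1/2 := by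
    rw [code_eq, htf_j]; norm_num; rfl
  have hcu : code p x u = (rk d u : ℚ) + 1/2 := by
    rw [code_eq, htf_u]; norm_num; rfl
  have hcv : code p x v = (rk d v : ℚ) + 1/2 := by
    rw [code_eq, htf_v]; norm_num; rfl
  have hcs : ∀ k : Fin n, k ≠ i → k ≠ j → k ≠ u → k ≠ v → code p x k = (rk d k : ℚ) := by
    intro k hki hkj hku hkv
    rw [code_eq]
    have : (Finset.univ.filter fun l => l ≠ k ∧ d l = d k) = ∅ := by
      rw [Finset.filter_eq_empty_iff]
      rintro l - ⟨h1, h2⟩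
      rcases hties l k h1 h2 with ⟨ha, hb⟩ | ⟨ha, hb⟩ | ⟨ha, hb⟩ | ⟨ha, hb⟩
      · exact hkj hb
      · exact hki hb
      · exact hkv hb
      · exact hku hb
    rw [this]; norm_num; rfl
  have hcij : code p x i = code p x j := by
    rw [hci, hcj, rk_congr hdij]
  have hcuv : code p x u = code p x v := by
    rw [hcu, hcv, rk_congr hduv]
  have hdiu : d i ≠ d u := by
    intro h
    rcases hties i u hiu h with ⟨ha, hb⟩ | ⟨ha, hb⟩ | ⟨ha, hb⟩ | ⟨ha, hb⟩
    · exact hju hb.symm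
    · exact hij ha
    · exact hiu ha
    · exact hiv ha
  rcases hdiu.lt_or_gt with hlt | hlt
  · -- d i < d u : pair (u,v) is the high-ranked-low? here u is above i; lower rank is rk d u
    obtain ⟨hgap, hbound, hbij⟩ := core d u v i j huv hiu.symm hju.symm hiv.symm hjv.symm hij
      hduv hdij hlt (by intro a b h1 h2; rcases hties a b h1 h2 with h | h | h | h <;> tauto)
    refine ⟨rk d u, rk d i, hgap, hbound, hcij, hcuv, Or.inr ⟨hci, hcu⟩, ?_⟩
    have hdom : {k : Fin n | k ≠ u ∧ k ≠ v ∧ k ≠ i ∧ k ≠ j}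
        = {k : Fin n | k ≠ i ∧ k ≠ j ∧ k ≠ u ∧ k ≠ v} := by
      ext t; simp only [Set.mem_setOf_eq]; tauto
    rw [hdom] at hbij
    exact hbij.congr fun k hk => (hcs k hk.1 hk.2.1 hk.2.2.1 hk.2.2.2).symm
  · -- d u < d i
    obtain ⟨hgap, hbound, hbij⟩ := core d i j u v hij hiu hiv hju hjv huv hdij hduv hlt hties
    refine ⟨rk d i, rk d u, hgap, hbound, hcij, hcuv, Or.inl ⟨hci, hcu⟩, ?_⟩
    exact hbij.congr fun k hk => (hcs k hk.1 hk.2.1 hk.2.2.1 hk.2.2.2).symm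
end
end

section
/- If x ∈ ℝ² is a 3-I vertex point whose ties are exactly the three pairs contained in {i,j,k}, then code(x)_i = code(x)_j = code(x)_k = z + 1 for some integer z with 0 ≤ z ≤ n−3, and the restriction of code(x) to the remaining n−3 indices is a bijection onto {0,1,…,n−1} ∖ {z, z+1, z+2}. -/
noncomputable section

open Metric

/-- a 3-I vertex point whose ties are exactly the pairs of `{i,j,k}` satisfies
`code(x)_i = code(x)_j = code(x)_k = z + 1` for some `0 ≤ z ≤ n−3`, and the restriction of
the code to the remaining `n−3` indices is a bijection onto `{0,…,n−1} ∖ {z, z+1, z+2}`. -/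
theorem vertex3I_code_base {n : ℕ} (hn : 2 ≤ n) (p : Fin n → Pt)
    (hp : Function.Injective p) (x : Pt) (i j k : Fin n)
    (hij : i ≠ j) (hik : i ≠ k) (hjk : j ≠ k)
    (hexact : ∀ a b, Tie p x a b ↔
      (a ≠ b ∧ a ∈ ({i, j, k} : Set (Fin n)) ∧ b ∈ ({i, j, k} : Set (Fin n)))) :
    ∃ z : ℕ, z ≤ n - 3 ∧
      code p x i = (z : ℚ) + 1 ∧ code p x j = (z : ℚ) + 1 ∧ code p x k = (z : ℚ) + 1 ∧
      Set.BijOn (code p x) {t : Fin n | t ≠ i ∧ t ≠ j ∧ t ≠ k}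
        (codeRange n \ {(z : ℚ), (z : ℚ) + 1, (z : ℚ) + 2}) := by
  classical
  have hcode : ∀ t : Fin n, code p x t =
      ((Finset.univ.filter fun s : Fin n =>
          s ≠ t ∧ dist x (p t) < dist x (p s)).card : ℚ)
      + (1/2) * ((Finset.univ.filter fun s : Fin n =>
          s ≠ t ∧ dist x (p s) = dist x (p t)).card : ℚ) := by
    intro t
    simp [code, Set.ncard_eq_toFinset_card', Set.toFinset_setOf]
  set d : Fin n → ℝ := fun t => dist x (p t) with hd
  -- basic tie facts
  have hdij : d i = d j := ((hexact i j).2 ⟨hij, by simp, by simp⟩).2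
  have hdik : d i = d k := ((hexact i k).2 ⟨hik, by simp, by simp⟩).2
  -- distinctness facts
  have hne : ∀ t : Fin n, t ≠ i → t ≠ j → t ≠ k → ∀ s, s ≠ t → d s ≠ d t := by
    intro t hti htj htk s hst hds
    have htie : Tie p x s t := ⟨hst, hds⟩
    have := ((hexact s t).1 htie).2.2
    simp only [Set.mem_insert_iff, Set.mem_singleton_iff] at this
    rcases this with h|h|h
    · exact hti h
    · exact htj h
    · exact htk h
  -- the finset of "other" indices
  set S : Finset (Fin n) := Finset.univ.filter (fun t => t ≠ i ∧ t ≠ j ∧ t ≠ k) with hS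
  have hScompl : S = ({i, j, k} : Finset (Fin n))ᶜ := by
    ext t; simp [hS, and_assoc, not_or]
  have hcard3 : ({i, j, k} : Finset (Fin n)).card = 3 := by
    rw [Finset.card_insert_of_notMem (by simp [hij, hik]),
      Finset.card_insert_of_notMem (by simp [hjk]), Finset.card_singleton]
  have hn3 : 3 ≤ n := by
    have := Finset.card_le_univ ({i, j, k} : Finset (Fin n))
    simpa [hcard3] using this
  have hScard : S.card = n - 3 := by
    rw [hScompl, Finset.card_compl, hcard3]; simp
  set G : Fin n → Finset (Fin n) :=
    fun t => Finset.univ.filter (fun s => s ≠ t ∧ d t < d s) with hG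
  set z : ℕ := (S.filter (fun t => d i < d t)).card with hz
  have hzle : z ≤ n - 3 := by
    rw [hz, ← hScard]; exact Finset.card_filter_le _ _
  -- code values at i, j, k
  have hEi : (Finset.univ.filter fun s : Fin n => s ≠ i ∧ d s = d i) = {j, k} := by
    ext s
    simp only [Finset.mem_filter, Finset.mem_univ, true_and, Finset.mem_insert,
      Finset.mem_singleton]
    constructor
    · rintro ⟨hsi, hds⟩
      have := ((hexact s i).1 ⟨hsi, hds⟩).2.1
      simp only [Set.mem_insert_iff, Set.mem_singleton_iff] at this
      rcases this with h|h|h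
      · exact absurd h hsi
      · exact Or.inl h
      · exact Or.inr h
    · rintro (rfl|rfl)
      · exact ⟨Ne.symm hij, hdij.symm⟩
      · exact ⟨Ne.symm hik, hdik.symm⟩
  have hEj : (Finset.univ.filter fun s : Fin n => s ≠ j ∧ d s = d j) = {i, k} := by
    ext s
    simp only [Finset.mem_filter, Finset.mem_univ, true_and, Finset.mem_insert,
      Finset.mem_singleton]
    constructor
    · rintro ⟨hsj, hds⟩
      have := ((hexact s j).1 ⟨hsj, hds⟩).2.1
      simp only [Set.mem_insert_iff, Set.mem_singleton_iff] at this
      rcases this with h|h|h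
      · exact Or.inl h
      · exact absurd h hsj
      · exact Or.inr h
    · rintro (rfl|rfl)
      · exact ⟨hij, hdij⟩
      · exact ⟨Ne.symm hjk, hdik ▸ hdij ▸ rfl⟩
  have hEk : (Finset.univ.filter fun s : Fin n => s ≠ k ∧ d s = d k) = {i, j} := by
    ext s
    simp only [Finset.mem_filter, Finset.mem_univ, true_and, Finset.mem_insert,
      Finset.mem_singleton]
    constructor
    · rintro ⟨hsk, hds⟩
      have := ((hexact s k).1 ⟨hsk, hds⟩).2.1
      simp only [Set.mem_insert_iff, Set.mem_singleton_iff] at this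
      rcases this with h|h|h
      · exact Or.inl h
      · exact Or.inr h
      · exact absurd h hsk
    · rintro (rfl|rfl)
      · exact ⟨hik, hdik⟩
      · exact ⟨hjk, hdik ▸ hdij ▸ rfl⟩
  have hGi : ∀ c : Fin n, d c = d i →
      (Finset.univ.filter fun s : Fin n => s ≠ c ∧ d c < d s)
        = S.filter (fun t => d i < d t) := by
    intro c hc
    ext s
    simp only [Finset.mem_filter, Finset.mem_univ, true_and, hS]
    constructor
    · rintro ⟨hsc, hlt⟩
      rw [hc] at hlt
      refine ⟨⟨?_, ?_, ?_⟩, hlt⟩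
      · rintro rfl; exact lt_irrefl _ hlt
      · rintro rfl; rw [← hdij] at hlt; exact lt_irrefl _ hlt
      · rintro rfl; rw [← hdik] at hlt; exact lt_irrefl _ hlt
    · rintro ⟨⟨h1, h2, h3⟩, hlt⟩
      rw [hc]
      exact ⟨fun hh => by subst hh; rw [hc] at hlt; exact lt_irrefl _ hlt, hlt⟩
  have hcodei : code p x i = (z : ℚ) + 1 := by
    rw [hcode i, hGi i rfl, hEi, ← hz]
    rw [Finset.card_insert_of_notMem (by simp [hjk]), Finset.card_singleton]
    norm_num
  have hcodej : code p x j = (z : ℚ) + 1 := by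
    rw [hcode j, hGi j hdij.symm, hEj, ← hz]
    rw [Finset.card_insert_of_notMem (by simp [hik]), Finset.card_singleton]
    norm_num
  have hcodek : code p x k = (z : ℚ) + 1 := by
    rw [hcode k, hGi k hdik.symm, hEk, ← hz]
    rw [Finset.card_insert_of_notMem (by simp [hij]), Finset.card_singleton]
    norm_num
  -- code at other points
  have hcodeS : ∀ t ∈ S, code p x t = ((G t).card : ℚ) := by
    intro t ht
    rw [hS, Finset.mem_filter] at ht
    have hE : (Finset.univ.filter fun s : Fin n => s ≠ t ∧ d s = d t) = ∅ := by
      ext s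
      simp only [Finset.mem_filter, Finset.mem_univ, true_and, Finset.notMem_empty,
        iff_false, not_and]
      intro hst
      exact hne t ht.2.1 ht.2.2.1 ht.2.2.2 s hst
    rw [hcode t, hE, hG]
    norm_num [hd]
  refine ⟨z, hzle, hcodei, hcodej, hcodek, ?_⟩
  -- counting lemmas
  have hbound : ∀ t : Fin n, (G t).card < n := by
    intro t
    have hsub : G t ⊆ Finset.univ.erase t := by
      intro s hs
      rw [hG, Finset.mem_filter] at hs
      exact Finset.mem_erase.2 ⟨hs.2.1, Finset.mem_univ s⟩
    calc (G t).card ≤ (Finset.univ.erase t).card := Finset.card_le_card hsub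
      _ < Finset.univ.card := Finset.card_erase_lt_of_mem (Finset.mem_univ t)
      _ = n := by simp
  have hlt : ∀ t ∈ S, d i < d t → (G t).card < z := by
    intro t ht hdt
    rw [hS, Finset.mem_filter] at ht
    have htmem : t ∈ S.filter (fun u => d i < d u) := by
      rw [Finset.mem_filter, hS, Finset.mem_filter]
      exact ⟨⟨Finset.mem_univ t, ht.2⟩, hdt⟩
    have hsub : G t ⊆ (S.filter (fun u => d i < d u)).erase t := by
      intro s hs
      rw [hG, Finset.mem_filter] at hs
      obtain ⟨-, hst, hlt'⟩ := hs
      have hdis : d i < d s := lt_trans hdt hlt'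
      refine Finset.mem_erase.2 ⟨hst, ?_⟩
      rw [Finset.mem_filter, hS, Finset.mem_filter]
      refine ⟨⟨Finset.mem_univ s, ?_, ?_, ?_⟩, hdis⟩
      · rintro rfl; exact lt_irrefl _ hdis
      · rintro rfl; rw [← hdij] at hdis; exact lt_irrefl _ hdis
      · rintro rfl; rw [← hdik] at hdis; exact lt_irrefl _ hdis
    calc (G t).card ≤ ((S.filter (fun u => d i < d u)).erase t).card :=
          Finset.card_le_card hsub
      _ < (S.filter (fun u => d i < d u)).card := Finset.card_erase_lt_of_mem htmem
      _ = z := hz.symm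
  have hgt : ∀ t ∈ S, d t < d i → z + 3 ≤ (G t).card := by
    intro t ht hdt
    rw [hS, Finset.mem_filter] at ht
    have hiS : i ∉ S.filter (fun u => d i < d u) := by
      rw [Finset.mem_filter, hS, Finset.mem_filter]; tauto
    have hjS : j ∉ S.filter (fun u => d i < d u) := by
      rw [Finset.mem_filter, hS, Finset.mem_filter]; tauto
    have hkS : k ∉ S.filter (fun u => d i < d u) := by
      rw [Finset.mem_filter, hS, Finset.mem_filter]; tauto
    have hsub : insert i (insert j (insert k (S.filter (fun u => d i < d u)))) ⊆ G t := by
      intro s hs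
      rw [hG, Finset.mem_filter]
      refine ⟨Finset.mem_univ s, ?_⟩
      simp only [Finset.mem_insert] at hs
      rcases hs with rfl|rfl|rfl|hs
      · exact ⟨fun hh => ht.2.1 hh.symm, hdt⟩
      · exact ⟨fun hh => ht.2.2.1 hh.symm, hdij ▸ hdt⟩
      · exact ⟨fun hh => ht.2.2.2 hh.symm, hdik ▸ hdt⟩
      · rw [Finset.mem_filter] at hs
        have : d t < d s := lt_trans hdt hs.2
        exact ⟨fun hh => by subst hh; exact lt_irrefl _ this, this⟩
    have hcardins :
        (insert i (insert j (insert k (S.filter (fun u => d i < d u))))).card = z + 3 := by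
      rw [Finset.card_insert_of_notMem (by simp [hij, hik, hjS, hkS, hiS]),
        Finset.card_insert_of_notMem (by simp [hjk, hjS, hkS]),
        Finset.card_insert_of_notMem hkS, ← hz]
    calc z + 3 = _ := hcardins.symm
      _ ≤ (G t).card := Finset.card_le_card hsub
  have hmono : ∀ t u : Fin n, d t < d u → (G u).card < (G t).card := by
    intro t u hdu
    have hsub : insert u (G u) ⊆ G t := by
      intro s hs
      rw [Finset.mem_insert] at hs
      rw [hG, Finset.mem_filter]
      rcases hs with rfl|hs
      · exact ⟨Finset.mem_univ s, fun hh => by subst hh; exact lt_irrefl _ hdu, hdu⟩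
      · rw [hG, Finset.mem_filter] at hs
        have : d t < d s := lt_trans hdu hs.2.2
        exact ⟨Finset.mem_univ s, fun hh => by subst hh; exact lt_irrefl _ this, this⟩
    have huG : u ∉ G u := by rw [hG, Finset.mem_filter]; simp
    calc (G u).card < (insert u (G u)).card := by
          rw [Finset.card_insert_of_notMem huG]; omega
      _ ≤ (G t).card := Finset.card_le_card hsub
  have hSset : {t : Fin n | t ≠ i ∧ t ≠ j ∧ t ≠ k} = (S : Set (Fin n)) := by
    ext t; simp [hS]
  -- MapsTo
  have hnotin : ∀ t ∈ S, ((G t).card : ℚ) ∉ ({(z : ℚ), (z : ℚ) + 1, (z : ℚ) + 2} : Set ℚ) := by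
    intro t ht hmem
    have hzq : ∀ m : ℕ, ((G t).card : ℚ) = (m : ℚ) → (G t).card = m := by
      intro m hm; exact_mod_cast hm
    have hcases : (G t).card = z ∨ (G t).card = z + 1 ∨ (G t).card = z + 2 := by
      simp only [Set.mem_insert_iff, Set.mem_singleton_iff] at hmem
      rcases hmem with h|h|h
      · exact Or.inl (hzq z h)
      · exact Or.inr (Or.inl (hzq (z+1) (by push_cast; linarith)))
      · exact Or.inr (Or.inr (hzq (z+2) (by push_cast; linarith)))
    rw [hS, Finset.mem_filter] at ht
    have hdne : d t ≠ d i := fun hh =>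
      hne t ht.2.1 ht.2.2.1 ht.2.2.2 i (fun hh2 => ht.2.1 hh2.symm) hh.symm
    rcases lt_or_gt_of_ne hdne with hcase|hcase
    · have := hgt t (by rw [hS, Finset.mem_filter]; exact ht) hcase
      omega
    · have := hlt t (by rw [hS, Finset.mem_filter]; exact ht) hcase
      omega
  have hmaps : Set.MapsTo (code p x) {t : Fin n | t ≠ i ∧ t ≠ j ∧ t ≠ k}
      (codeRange n \ {(z : ℚ), (z : ℚ) + 1, (z : ℚ) + 2}) := by
    intro t ht
    rw [hSset] at ht
    rw [hcodeS t ht]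
    exact ⟨⟨(G t).card, hbound t, rfl⟩, hnotin t ht⟩
  -- InjOn
  have hinj : Set.InjOn (code p x) {t : Fin n | t ≠ i ∧ t ≠ j ∧ t ≠ k} := by
    intro t ht u hu heq
    rw [hSset, Finset.mem_coe] at ht hu
    by_contra hne'
    have hd' : d t ≠ d u := by
      have hu' := hu
      rw [hS, Finset.mem_filter] at hu'
      exact fun hh => hne u hu'.2.1 hu'.2.2.1 hu'.2.2.2 t hne' hh
    rw [hcodeS t ht, hcodeS u hu, Nat.cast_inj] at heq
    rcases lt_or_gt_of_ne hd' with h|h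
    · exact absurd heq (Nat.ne_of_lt (hmono t u h)).symm
    · exact absurd heq (Nat.ne_of_lt (hmono u t h))
  -- SurjOn via cardinality
  have hTq : (codeRange n \ {(z : ℚ), (z : ℚ) + 1, (z : ℚ) + 2}) =
      ↑(((Finset.range n).image (fun m : ℕ => (m : ℚ))) \
        {(z : ℚ), (z : ℚ) + 1, (z : ℚ) + 2}) := by
    ext q
    simp only [codeRange, Set.mem_diff, Set.mem_setOf_eq, Finset.coe_sdiff,
      Finset.coe_image, Finset.coe_range, Set.mem_image, Set.mem_Iio,
      Finset.coe_insert, Finset.coe_singleton]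
    constructor
    · rintro ⟨⟨m, hm, rfl⟩, hq⟩; exact ⟨⟨m, hm, rfl⟩, hq⟩
    · rintro ⟨⟨m, hm, rfl⟩, hq⟩; exact ⟨⟨m, hm, rfl⟩, hq⟩
  have hsub3 : ({(z : ℚ), (z : ℚ) + 1, (z : ℚ) + 2} : Finset ℚ) ⊆
      (Finset.range n).image (fun m : ℕ => (m : ℚ)) := by
    intro q hq
    simp only [Finset.mem_insert, Finset.mem_singleton] at hq
    rw [Finset.mem_image]
    rcases hq with rfl|rfl|rfl
    · exact ⟨z, Finset.mem_range.2 (by omega), rfl⟩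
    · exact ⟨z + 1, Finset.mem_range.2 (by omega), by push_cast; ring⟩
    · exact ⟨z + 2, Finset.mem_range.2 (by omega), by push_cast; ring⟩
  have hcard3q : ({(z : ℚ), (z : ℚ) + 1, (z : ℚ) + 2} : Finset ℚ).card = 3 := by
    have h01 : (z : ℚ) ≠ (z : ℚ) + 1 := by intro h; linarith
    have h02 : (z : ℚ) ≠ (z : ℚ) + 2 := by intro h; linarith
    have h12 : (z : ℚ) + 1 ≠ (z : ℚ) + 2 := by intro h; linarith
    rw [Finset.card_insert_of_notMem (by simp [h01, h02]),
      Finset.card_insert_of_notMem (by simp [h12]), Finset.card_singleton]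
  have hcardTq : (((Finset.range n).image (fun m : ℕ => (m : ℚ))) \
      ({(z : ℚ), (z : ℚ) + 1, (z : ℚ) + 2} : Finset ℚ)).card = n - 3 := by
    rw [Finset.card_sdiff_of_subset hsub3, Finset.card_image_of_injective _ Nat.cast_injective,
      Finset.card_range, hcard3q]
  have hinjS : Set.InjOn (code p x) (S : Set (Fin n)) := by rw [← hSset]; exact hinj
  have hIcard : (S.image (code p x)).card = n - 3 := by
    rw [Finset.card_image_of_injOn hinjS, hScard]
  have hIsub : S.image (code p x) ⊆ ((Finset.range n).image (fun m : ℕ => (m : ℚ))) \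
      ({(z : ℚ), (z : ℚ) + 1, (z : ℚ) + 2} : Finset ℚ) := by
    intro q hq
    rw [Finset.mem_image] at hq
    obtain ⟨t, ht, rfl⟩ := hq
    have := hmaps (by rw [hSset]; exact_mod_cast ht)
    rw [hTq] at this
    exact_mod_cast this
  have hIeq : S.image (code p x) = ((Finset.range n).image (fun m : ℕ => (m : ℚ))) \
      ({(z : ℚ), (z : ℚ) + 1, (z : ℚ) + 2} : Finset ℚ) :=
    Finset.eq_of_subset_of_card_le hIsub (by rw [hIcard, hcardTq])
  have hsurj : Set.SurjOn (code p x) {t : Fin n | t ≠ i ∧ t ≠ j ∧ t ≠ k}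
      (codeRange n \ {(z : ℚ), (z : ℚ) + 1, (z : ℚ) + 2}) := by
    intro q hq
    rw [hTq, ← hIeq] at hq
    have : q ∈ S.image (code p x) := by exact_mod_cast hq
    rw [Finset.mem_image] at this
    obtain ⟨t, ht, rfl⟩ := this
    exact ⟨t, by rw [hSset]; exact_mod_cast ht, rfl⟩
  exact ⟨hmaps, hinj, hsurj⟩
end
end

section
/- Different types of particles are never equi-base: if x, y ∈ ℝ² are of two different types among cell point, edge point, 2-I vertex point and 3-I vertex point, then there is no permutation σ of {1,…,n} such that code(x)_i = code(y)_{σ(i)} for all i (their chromatic codes have different multisets of values). -/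
noncomputable section

open Metric

/-- The four particle types. -/
inductive PType where
  | cell : PType
  | edge : PType
  | vtx2 : PType
  | vtx3 : PType

/-- `x` is a particle point of the given type. -/
def HasPType {n : ℕ} (p : Fin n → Pt) (x : Pt) : PType → Prop
  | .cell => CellPoint p x
  | .edge => EdgePoint p x
  | .vtx2 => Vertex2I p x
  | .vtx3 => Vertex3I p x


section Aux

open Finset

variable {n : ℕ}

/-- The finset of indices strictly farther than `i`. -/
def Aset (p : Fin n → Pt) (x : Pt) (i : Fin n) : Finset (Fin n) :=
  Finset.univ.filter (fun j => j ≠ i ∧ dist x (p i) < dist x (p j))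

/-- The finset of indices tied with `i`. -/
def Tset (p : Fin n → Pt) (x : Pt) (i : Fin n) : Finset (Fin n) :=
  Finset.univ.filter (fun j => j ≠ i ∧ dist x (p j) = dist x (p i))

lemma mem_Aset {p : Fin n → Pt} {x : Pt} {i j : Fin n} :
    j ∈ Aset p x i ↔ j ≠ i ∧ dist x (p i) < dist x (p j) := by
  simp [Aset]

lemma mem_Tset {p : Fin n → Pt} {x : Pt} {i j : Fin n} :
    j ∈ Tset p x i ↔ j ≠ i ∧ dist x (p j) = dist x (p i) := by
  simp [Tset]

lemma ncard_setOf (P : Fin n → Prop) [DecidablePred P] :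
    Set.ncard {j : Fin n | P j} = (Finset.univ.filter P).card := by
  rw [← Set.ncard_coe_finset]
  congr 1
  ext k
  simp

lemma code_eq_finset (p : Fin n → Pt) (x : Pt) (i : Fin n) :
    code p x i = ((Aset p x i).card : ℚ) + (1/2) * ((Tset p x i).card : ℚ) := by
  unfold code Aset Tset
  rw [ncard_setOf, ncard_setOf]

lemma isI_of_T0 {p : Fin n → Pt} {x : Pt} {i : Fin n} (h : Tset p x i = ∅) :
    ∃ m : ℤ, code p x i = (m : ℚ) := by
  refine ⟨(Aset p x i).card, ?_⟩
  rw [code_eq_finset, h]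
  simp

lemma isI_of_T2 {p : Fin n → Pt} {x : Pt} {i : Fin n} (h : (Tset p x i).card = 2) :
    ∃ m : ℤ, code p x i = (m : ℚ) := by
  refine ⟨(Aset p x i).card + 1, ?_⟩
  rw [code_eq_finset, h]
  push_cast
  ring

lemma notI_of_T1 {p : Fin n → Pt} {x : Pt} {i : Fin n} (h : (Tset p x i).card = 1) :
    ¬ ∃ m : ℤ, code p x i = (m : ℚ) := by
  rintro ⟨m, hm⟩
  rw [code_eq_finset, h] at hm
  have h2 : ((2 * (Aset p x i).card + 1 : ℤ) : ℚ) = ((2 * m : ℤ) : ℚ) := by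
    push_cast
    linarith
  have h3 : (2 * ((Aset p x i).card : ℤ) + 1 : ℤ) = 2 * m := by exact_mod_cast h2
  omega

open Classical in
/-- Number of indices whose code is not an integer. -/
noncomputable def Hcount (p : Fin n → Pt) (x : Pt) : ℕ :=
  (Finset.univ.filter (fun i => ¬ ∃ m : ℤ, code p x i = (m : ℚ))).card

lemma Hcount_perm (p : Fin n → Pt) (x y : Pt) (σ : Equiv.Perm (Fin n))
    (h : ∀ i, code p x i = code p y (σ i)) : Hcount p x = Hcount p y := by
  classical
  unfold Hcount
  refine Finset.card_bij (fun a _ => σ a) ?_ ?_ ?_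
  · intro a ha
    simp only [Finset.mem_filter, Finset.mem_univ, true_and] at ha ⊢
    rwa [← h a]
  · intro a _ b _ hab
    exact σ.injective hab
  · intro b hb
    simp only [Finset.mem_filter, Finset.mem_univ, true_and] at hb ⊢
    refine ⟨σ.symm b, ?_, by simp⟩
    rw [h (σ.symm b), σ.apply_symm_apply]
    exact hb

lemma pair_mem_right {a b c d : Fin n} (h : ({a, b} : Set (Fin n)) = {c, d}) :
    b = c ∨ b = d := by
  have hb : b ∈ ({c, d} : Set (Fin n)) := by
    rw [← h]; right; rfl
  simpa using hb

lemma pair_mem_left {a b c d : Fin n} (h : ({a, b} : Set (Fin n)) = {c, d}) :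
    a = c ∨ a = d := by
  have hb : a ∈ ({c, d} : Set (Fin n)) := by
    rw [← h]; left; rfl
  simpa using hb

lemma code_add_one_le (p : Fin n → Pt) (x : Pt) {i j : Fin n}
    (hlt : dist x (p i) < dist x (p j)) : code p x j + 1 ≤ code p x i := by
  classical
  have hsub : insert j (Aset p x j ∪ Tset p x j) ⊆ Aset p x i := by
    intro k hk
    rw [Finset.mem_insert, Finset.mem_union] at hk
    rw [mem_Aset]
    rcases hk with rfl | hk | hk
    · exact ⟨by rintro rfl; exact lt_irrefl _ hlt, hlt⟩
    · rw [mem_Aset] at hk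
      exact ⟨by rintro rfl; linarith [hk.2], lt_trans hlt hk.2⟩
    · rw [mem_Tset] at hk
      exact ⟨by rintro rfl; linarith [hk.2], hk.2 ▸ hlt⟩
  have hdisj : Disjoint (Aset p x j) (Tset p x j) := by
    rw [Finset.disjoint_left]
    intro k hk1 hk2
    rw [mem_Aset] at hk1
    rw [mem_Tset] at hk2
    linarith [hk1.2, hk2.2.le]
  have hjmem : j ∉ Aset p x j ∪ Tset p x j := by
    rw [Finset.mem_union, mem_Aset, mem_Tset]
    push_neg
    exact ⟨fun h => absurd rfl h, fun h => absurd rfl h⟩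
  have hcard : (Aset p x j).card + (Tset p x j).card + 1 ≤ (Aset p x i).card := by
    have h1 := Finset.card_le_card hsub
    rwa [Finset.card_insert_of_notMem hjmem, Finset.card_union_of_disjoint hdisj] at h1
  rw [code_eq_finset, code_eq_finset]
  have h2 : ((Aset p x j).card : ℚ) + ((Tset p x j).card : ℚ) + 1 ≤ ((Aset p x i).card : ℚ) := by
    exact_mod_cast hcard
  have h3 : (0:ℚ) ≤ ((Tset p x i).card : ℚ) := by positivity
  have h4 : (0:ℚ) ≤ ((Tset p x j).card : ℚ) := by positivity
  linarith

lemma code_congr (p : Fin n → Pt) (x : Pt) {i j : Fin n}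
    (heq : dist x (p i) = dist x (p j)) : code p x i = code p x j := by
  classical
  rw [code_eq_finset, code_eq_finset]
  have hA : Aset p x i = Aset p x j := by
    ext k
    rw [mem_Aset, mem_Aset]
    constructor
    · rintro ⟨hk, hlt⟩
      refine ⟨by rintro rfl; rw [heq] at hlt; exact lt_irrefl _ hlt, heq ▸ hlt⟩
    · rintro ⟨hk, hlt⟩
      refine ⟨by rintro rfl; rw [← heq] at hlt; exact lt_irrefl _ hlt, heq ▸ hlt⟩
  have hT : (Tset p x i).card = (Tset p x j).card := by
    set S : Finset (Fin n) := Finset.univ.filter (fun k => dist x (p k) = dist x (p i)) with hS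
    have hi : i ∈ S := by simp [hS]
    have hj : j ∈ S := by simp [hS, heq.symm]
    have e1 : Tset p x i = S.erase i := by
      ext b
      rw [mem_Tset, Finset.mem_erase]
      simp only [hS, Finset.mem_filter, Finset.mem_univ, true_and]
    have e2 : Tset p x j = S.erase j := by
      ext b
      rw [mem_Tset, Finset.mem_erase]
      simp only [hS, Finset.mem_filter, Finset.mem_univ, true_and]
      constructor
      · rintro ⟨h1, h2⟩; exact ⟨h1, h2.trans heq.symm⟩
      · rintro ⟨h1, h2⟩; exact ⟨h1, h2.trans heq⟩
    rw [e1, e2, Finset.card_erase_of_mem hi, Finset.card_erase_of_mem hj]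
  rw [hA, hT]

lemma Tset_eq_empty {p : Fin n → Pt} {x : Pt} {a : Fin n}
    (h : ∀ k, ¬ Tie p x a k) : Tset p x a = ∅ := by
  ext k
  rw [mem_Tset]
  simp only [Finset.notMem_empty, iff_false]
  rintro ⟨hk, hd⟩
  exact h k ⟨Ne.symm hk, hd.symm⟩

lemma H_cell {p : Fin n → Pt} {x : Pt} (h : CellPoint p x) : Hcount p x = 0 := by
  classical
  unfold Hcount
  rw [Finset.card_eq_zero, Finset.filter_eq_empty_iff]
  intro a _
  exact fun hc => hc (isI_of_T0 (Tset_eq_empty (fun k => h a k)))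

lemma H_edge {p : Fin n → Pt} {x : Pt} (h : EdgePoint p x) : Hcount p x = 2 := by
  classical
  obtain ⟨i, j, ⟨hij, hd⟩, hu⟩ := h
  have hTi : Tset p x i = {j} := by
    ext k
    rw [mem_Tset, Finset.mem_singleton]
    constructor
    · rintro ⟨hk, hdk⟩
      have := hu i k ⟨Ne.symm hk, hdk.symm⟩
      rcases pair_mem_right this with h1 | h1
      · exact absurd h1 hk
      · exact h1
    · rintro rfl
      exact ⟨Ne.symm hij, hd.symm⟩
  have hTj : Tset p x j = {i} := by
    ext k
    rw [mem_Tset, Finset.mem_singleton]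
    constructor
    · rintro ⟨hk, hdk⟩
      have := hu j k ⟨Ne.symm hk, hdk.symm⟩
      rcases pair_mem_right this with h1 | h1
      · exact h1
      · exact absurd h1 hk
    · rintro rfl
      exact ⟨hij, hd⟩
  have hTo : ∀ a, a ≠ i → a ≠ j → Tset p x a = ∅ := by
    intro a ha1 ha2
    refine Tset_eq_empty ?_
    intro k hk
    rcases pair_mem_left (hu a k hk) with h1 | h1
    · exact ha1 h1
    · exact ha2 h1
  unfold Hcount
  have hfe : (Finset.univ.filter (fun a => ¬ ∃ m : ℤ, code p x a = (m : ℚ)))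
      = {i, j} := by
    ext a
    simp only [Finset.mem_filter, Finset.mem_univ, true_and, Finset.mem_insert,
      Finset.mem_singleton]
    constructor
    · intro hnot
      by_contra hc
      push_neg at hc
      exact hnot (isI_of_T0 (hTo a hc.1 hc.2))
    · rintro (rfl | rfl)
      · exact notI_of_T1 (by rw [hTi]; simp)
      · exact notI_of_T1 (by rw [hTj]; simp)
  rw [hfe, Finset.card_insert_of_notMem (by simpa using hij), Finset.card_singleton]

lemma H_v2 {p : Fin n → Pt} {x : Pt} (h : Vertex2I p x) : Hcount p x = 4 := by
  classical
  obtain ⟨i, j, u, v, hij, hiu, hiv, hju, hjv, huv, ⟨_, hdij⟩, ⟨_, hduv⟩, hall⟩ := h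
  have hTi : Tset p x i = {j} := by
    ext k
    rw [mem_Tset, Finset.mem_singleton]
    constructor
    · rintro ⟨hk, hdk⟩
      rcases hall i k ⟨Ne.symm hk, hdk.symm⟩ with h1 | h1
      · rcases pair_mem_right h1 with h2 | h2
        · exact absurd h2 hk
        · exact h2
      · rcases pair_mem_left h1 with h2 | h2
        · exact absurd h2 hiu
        · exact absurd h2 hiv
    · rintro rfl
      exact ⟨Ne.symm hij, hdij.symm⟩
  have hTj : Tset p x j = {i} := by
    ext k
    rw [mem_Tset, Finset.mem_singleton]
    constructor
    · rintro ⟨hk, hdk⟩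
      rcases hall j k ⟨Ne.symm hk, hdk.symm⟩ with h1 | h1
      · rcases pair_mem_right h1 with h2 | h2
        · exact h2
        · exact absurd h2 hk
      · rcases pair_mem_left h1 with h2 | h2
        · exact absurd h2 hju
        · exact absurd h2 hjv
    · rintro rfl
      exact ⟨hij, hdij⟩
  have hTu : Tset p x u = {v} := by
    ext k
    rw [mem_Tset, Finset.mem_singleton]
    constructor
    · rintro ⟨hk, hdk⟩
      rcases hall u k ⟨Ne.symm hk, hdk.symm⟩ with h1 | h1
      · rcases pair_mem_left h1 with h2 | h2
        · exact absurd h2 (Ne.symm hiu)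
        · exact absurd h2 (Ne.symm hju)
      · rcases pair_mem_right h1 with h2 | h2
        · exact absurd h2 hk
        · exact h2
    · rintro rfl
      exact ⟨Ne.symm huv, hduv.symm⟩
  have hTv : Tset p x v = {u} := by
    ext k
    rw [mem_Tset, Finset.mem_singleton]
    constructor
    · rintro ⟨hk, hdk⟩
      rcases hall v k ⟨Ne.symm hk, hdk.symm⟩ with h1 | h1
      · rcases pair_mem_left h1 with h2 | h2
        · exact absurd h2 (Ne.symm hiv)
        · exact absurd h2 (Ne.symm hjv)
      · rcases pair_mem_right h1 with h2 | h2
        · exact h2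
        · exact absurd h2 hk
    · rintro rfl
      exact ⟨huv, hduv⟩
  have hTo : ∀ a, a ≠ i → a ≠ j → a ≠ u → a ≠ v → Tset p x a = ∅ := by
    intro a h1 h2 h3 h4
    refine Tset_eq_empty ?_
    intro k hk
    rcases hall a k hk with h5 | h5
    · rcases pair_mem_left h5 with h6 | h6
      · exact h1 h6
      · exact h2 h6
    · rcases pair_mem_left h5 with h6 | h6
      · exact h3 h6
      · exact h4 h6
  unfold Hcount
  have hfe : (Finset.univ.filter (fun a => ¬ ∃ m : ℤ, code p x a = (m : ℚ)))
      = {i, j, u, v} := by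
    ext a
    simp only [Finset.mem_filter, Finset.mem_univ, true_and, Finset.mem_insert,
      Finset.mem_singleton]
    constructor
    · intro hnot
      by_contra hc
      push_neg at hc
      exact hnot (isI_of_T0 (hTo a hc.1 hc.2.1 hc.2.2.1 hc.2.2.2))
    · rintro (rfl | rfl | rfl | rfl)
      · exact notI_of_T1 (by rw [hTi]; simp)
      · exact notI_of_T1 (by rw [hTj]; simp)
      · exact notI_of_T1 (by rw [hTu]; simp)
      · exact notI_of_T1 (by rw [hTv]; simp)
  rw [hfe]
  rw [Finset.card_insert_of_notMem (by simp [hij, hiu, hiv]),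
    Finset.card_insert_of_notMem (by simp [hju, hjv]),
    Finset.card_insert_of_notMem (by simpa using huv), Finset.card_singleton]

lemma H_v3 {p : Fin n → Pt} {x : Pt} (h : Vertex3I p x) : Hcount p x = 0 := by
  classical
  obtain ⟨i, j, k, hij, hik, hjk, hiff⟩ := h
  have key : ∀ a : Fin n, ∃ m : ℤ, code p x a = (m : ℚ) := by
    intro a
    by_cases ha : a ∈ ({i, j, k} : Set (Fin n))
    · refine isI_of_T2 ?_
      have hTs : Tset p x a = ({i, j, k} : Finset (Fin n)).erase a := by
        ext b
        rw [mem_Tset, Finset.mem_erase]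
        constructor
        · rintro ⟨hb, hdb⟩
          have := (hiff a b).1 ⟨Ne.symm hb, hdb.symm⟩
          refine ⟨hb, ?_⟩
          have hb3 := this.2.2
          simp only [Set.mem_insert_iff, Set.mem_singleton_iff] at hb3
          simp only [Finset.mem_insert, Finset.mem_singleton]
          exact hb3
        · rintro ⟨hb, hb3⟩
          have hbS : b ∈ ({i, j, k} : Set (Fin n)) := by
            simp only [Finset.mem_insert, Finset.mem_singleton] at hb3
            simpa using hb3
          have := (hiff a b).2 ⟨Ne.symm hb, ha, hbS⟩
          exact ⟨hb, this.2.symm⟩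
      rw [hTs, Finset.card_erase_of_mem]
      · have : ({i, j, k} : Finset (Fin n)).card = 3 := by
          rw [Finset.card_insert_of_notMem (by simp [hij, hik]),
            Finset.card_insert_of_notMem (by simpa using hjk), Finset.card_singleton]
        omega
      · simp only [Set.mem_insert_iff, Set.mem_singleton_iff] at ha
        simp only [Finset.mem_insert, Finset.mem_singleton]
        exact ha
    · refine isI_of_T0 (Tset_eq_empty ?_)
      intro b hb
      exact ha ((hiff a b).1 hb).2.1
  unfold Hcount
  rw [Finset.card_eq_zero, Finset.filter_eq_empty_iff]
  intro a _
  exact fun hc => hc (key a)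

lemma nodup_cell {p : Fin n → Pt} {x : Pt} (h : CellPoint p x) :
    ¬ ∃ a b : Fin n, a ≠ b ∧ code p x a = code p x b := by
  rintro ⟨a, b, hab, hc⟩
  have hne : dist x (p a) ≠ dist x (p b) := fun hd => h a b ⟨hab, hd⟩
  rcases hne.lt_or_gt with hlt | hlt
  · have := code_add_one_le p x hlt
    linarith
  · have := code_add_one_le p x hlt
    linarith

lemma dup_v3 {p : Fin n → Pt} {x : Pt} (h : Vertex3I p x) :
    ∃ a b : Fin n, a ≠ b ∧ code p x a = code p x b := by
  obtain ⟨i, j, k, hij, hik, hjk, hiff⟩ := h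
  have ht : Tie p x i j := (hiff i j).2 ⟨hij, by simp, by simp⟩
  exact ⟨i, j, hij, code_congr p x ht.2⟩

lemma dup_perm (p : Fin n → Pt) (x y : Pt) (σ : Equiv.Perm (Fin n))
    (h : ∀ i, code p x i = code p y (σ i)) :
    (∃ a b : Fin n, a ≠ b ∧ code p y a = code p y b) →
    (∃ a b : Fin n, a ≠ b ∧ code p x a = code p x b) := by
  rintro ⟨a, b, hab, hc⟩
  refine ⟨σ.symm a, σ.symm b, fun he => hab (by simpa using congrArg σ he), ?_⟩
  rw [h (σ.symm a), h (σ.symm b), σ.apply_symm_apply, σ.apply_symm_apply]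
  exact hc

end Aux

/-- particles of different types are never equi-base: if `x` and `y` are of two
different types among cell/edge/2-I vertex/3-I vertex points, then no permutation of the
indices matches their chromatic codes. -/
theorem different_types_not_equibase {n : ℕ} (hn : 2 ≤ n) (p : Fin n → Pt)
    (hp : Function.Injective p) (x y : Pt) (tx ty : PType) (hty : tx ≠ ty)
    (hx : HasPType p x tx) (hy : HasPType p y ty) :
    ¬ ∃ σ : Equiv.Perm (Fin n), ∀ i, code p x i = code p y (σ i) := by
  rintro ⟨σ, hσ⟩
  have hH : Hcount p x = Hcount p y := Hcount_perm p x y σ hσ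
  have hσ' : ∀ i, code p y i = code p x (σ.symm i) := by
    intro i
    rw [hσ (σ.symm i), σ.apply_symm_apply]
  have hH' : Hcount p y = Hcount p x := hH.symm
  cases tx <;> cases ty <;> simp only [HasPType] at hx hy
  · exact hty rfl
  · rw [H_cell hx, H_edge hy] at hH; omega
  · rw [H_cell hx, H_v2 hy] at hH; omega
  · exact nodup_cell hx (dup_perm p x y σ hσ (dup_v3 hy))
  · rw [H_edge hx, H_cell hy] at hH; omega
  · exact hty rfl
  · rw [H_edge hx, H_v2 hy] at hH; omega
  · rw [H_edge hx, H_v3 hy] at hH; omega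
  · rw [H_v2 hx, H_cell hy] at hH; omega
  · rw [H_v2 hx, H_edge hy] at hH; omega
  · exact hty rfl
  · rw [H_v2 hx, H_v3 hy] at hH; omega
  · exact nodup_cell hy (dup_perm p y x σ.symm hσ' (dup_v3 hx))
  · rw [H_v3 hx, H_edge hy] at hH; omega
  · rw [H_v3 hx, H_v2 hy] at hH; omega
  · exact hty rfl
end
end

section
/- Chromatic codes of edges are unique: if x and y are edge points with code(x) = code(y), then x and y lie on the same edge, i.e., they have the same tie and for all indices i, j one has dist(x,p_i) ≤ dist(x,p_j) if and only if dist(y,p_i) ≤ dist(y,p_j). Equivalently, any two distinct edges are not equi-color. -/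
noncomputable section

open Metric

lemma code_eq_of_dist_eq {n : ℕ} (p : Fin n → Pt) (x : Pt) {i j : Fin n}
    (hij : dist x (p i) = dist x (p j)) : code p x i = code p x j := by
  unfold code
  have h1 : {k : Fin n | k ≠ i ∧ dist x (p i) < dist x (p k)}
      = {k : Fin n | k ≠ j ∧ dist x (p j) < dist x (p k)} := by
    ext k
    simp only [Set.mem_setOf_eq, hij]
    constructor
    · rintro ⟨-, h⟩
      exact ⟨fun hk => absurd (hk ▸ h) (lt_irrefl _), h⟩
    · rintro ⟨-, h⟩
      refine ⟨fun hk => ?_, h⟩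
      subst hk; exact absurd (hij ▸ h) (lt_irrefl _)
  have h2 : {k : Fin n | k ≠ i ∧ dist x (p k) = dist x (p i)}
      = {k : Fin n | dist x (p k) = dist x (p i)} \ {i} := by
    ext k; simp [and_comm]
  have h3 : {k : Fin n | k ≠ j ∧ dist x (p k) = dist x (p j)}
      = {k : Fin n | dist x (p k) = dist x (p i)} \ {j} := by
    ext k; simp [and_comm, hij]
  have hi : i ∈ {k : Fin n | dist x (p k) = dist x (p i)} := by simp
  have hj : j ∈ {k : Fin n | dist x (p k) = dist x (p i)} := by simp [hij]
  rw [h1, h2, h3, Set.ncard_diff_singleton_of_mem hi,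
    Set.ncard_diff_singleton_of_mem hj]

lemma code_lt_of_dist_lt {n : ℕ} (p : Fin n → Pt) (x : Pt) {i j : Fin n}
    (hij : dist x (p i) < dist x (p j)) : code p x j < code p x i := by
  set Ai := {k : Fin n | k ≠ i ∧ dist x (p i) < dist x (p k)} with hAi
  set Aj := {k : Fin n | k ≠ j ∧ dist x (p j) < dist x (p k)} with hAj
  set Ej := {k : Fin n | k ≠ j ∧ dist x (p k) = dist x (p j)} with hEj
  set B := {k : Fin n | dist x (p j) ≤ dist x (p k)} with hB
  have hBsub : B ⊆ Ai := by
    intro k hk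
    simp only [hB, Set.mem_setOf_eq] at hk
    have : dist x (p i) < dist x (p k) := lt_of_lt_of_le hij hk
    exact ⟨fun hk' => absurd (hk' ▸ this) (lt_irrefl _), this⟩
  have hBeq : B = Aj ∪ insert j Ej := by
    ext k
    simp only [hB, hAj, hEj, Set.mem_union, Set.mem_insert_iff, Set.mem_setOf_eq]
    constructor
    · intro hk
      rcases eq_or_lt_of_le hk with heq | hlt
      · by_cases hkj : k = j
        · exact Or.inr (Or.inl hkj)
        · exact Or.inr (Or.inr ⟨hkj, heq.symm⟩)
      · exact Or.inl ⟨fun h' => absurd (h' ▸ hlt) (lt_irrefl _), hlt⟩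
    · rintro (⟨-, h⟩ | rfl | ⟨-, h⟩)
      · exact h.le
      · exact le_refl _
      · exact h.ge
  have hdisj : Disjoint Aj (insert j Ej) := by
    rw [Set.disjoint_left]
    rintro k ⟨hkj, hklt⟩ hk
    rcases hk with rfl | ⟨-, heq⟩
    · exact hkj rfl
    · exact absurd (heq ▸ hklt) (lt_irrefl _)
  have hjEj : j ∉ Ej := by simp [hEj]
  have hcard : B.ncard = Aj.ncard + (Ej.ncard + 1) := by
    rw [hBeq, Set.ncard_union_eq hdisj (Set.toFinite _) (Set.toFinite _),
      Set.ncard_insert_of_notMem hjEj (Set.toFinite _)]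
  have hle : B.ncard ≤ Ai.ncard := Set.ncard_le_ncard hBsub (Set.toFinite _)
  unfold code
  rw [← hAi, ← hAj]
  have h2 : {k : Fin n | k ≠ j ∧ dist x (p k) = dist x (p j)} = Ej := rfl
  rw [h2]
  have key : (Aj.ncard : ℚ) + Ej.ncard + 1 ≤ (Ai.ncard : ℚ) := by
    have : Aj.ncard + (Ej.ncard + 1) ≤ Ai.ncard := hcard ▸ hle
    exact_mod_cast this
  have hEnn : (0:ℚ) ≤ ((Ej.ncard : ℚ)) := by positivity
  have hE' : (0:ℚ) ≤ (Set.ncard {k : Fin n | k ≠ i ∧ dist x (p k) = dist x (p i)} : ℚ) := by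
    positivity
  nlinarith

lemma dist_le_iff_code {n : ℕ} (p : Fin n → Pt) (x : Pt) (i j : Fin n) :
    dist x (p i) ≤ dist x (p j) ↔ code p x j ≤ code p x i := by
  constructor
  · intro h
    rcases eq_or_lt_of_le h with heq | hlt
    · exact (code_eq_of_dist_eq p x heq).ge
    · exact (code_lt_of_dist_lt p x hlt).le
  · intro h
    by_contra hc
    push_neg at hc
    exact absurd (code_lt_of_dist_lt p x hc) (not_lt.mpr h)

lemma dist_eq_iff_code {n : ℕ} (p : Fin n → Pt) (x : Pt) (i j : Fin n) :
    dist x (p i) = dist x (p j) ↔ code p x i = code p x j := by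
  constructor
  · exact code_eq_of_dist_eq p x
  · intro h
    rcases lt_trichotomy (dist x (p i)) (dist x (p j)) with hlt | heq | hgt
    · exact absurd h (ne_of_lt (code_lt_of_dist_lt p x hlt)).symm
    · exact heq
    · exact absurd h (ne_of_lt (code_lt_of_dist_lt p x hgt))

/-- chromatic codes of edges are unique: two edge points with the same code lie
on the same edge, i.e. they have the same tie and induce the same weak ordering of distances
to the generators. -/
theorem edge_codes_unique {n : ℕ} (hn : 2 ≤ n) (p : Fin n → Pt)
    (hp : Function.Injective p) (x y : Pt)
    (hx : EdgePoint p x) (hy : EdgePoint p y) (h : code p x = code p y) :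
    (∀ i j, Tie p x i j ↔ Tie p y i j) ∧
    (∀ i j, dist x (p i) ≤ dist x (p j) ↔ dist y (p i) ≤ dist y (p j)) := by
  constructor
  · intro i j
    unfold Tie
    rw [dist_eq_iff_code, dist_eq_iff_code, h]
  · intro i j
    rw [dist_le_iff_code, dist_le_iff_code, h]
end
end

section
/- If the generators are in general position, then the number of distinct chromatic codes attained by edge points of ℝ² equals C(n,2)² − 3·C(n,3), where C(n,k) is the binomial coefficient (this is the number of edges of the full-OACD). -/
noncomputable section

open Metric

namespace OACD

open RealInnerProductSpace

lemma pt_ext {x y : Pt} (h : ∀ k, x k = y k) : x = y := WithLp.ofLp_injective 2 (funext h)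

lemma pt_inner (x y : Pt) : ⟪x, y⟫ = x 0 * y 0 + x 1 * y 1 := by
  simp [PiLp.inner_apply, RCLike.inner_apply, Fin.sum_univ_two]
  ring

def rot (w : Pt) : Pt := (WithLp.equiv 2 (Fin 2 → ℝ)).symm ![-(w 1), w 0]

lemma rot_apply0 (w : Pt) : rot w 0 = -(w 1) := rfl
lemma rot_apply1 (w : Pt) : rot w 1 = w 0 := rfl

lemma inner_rot (w : Pt) : ⟪rot w, w⟫ = 0 := by
  rw [pt_inner, rot_apply0, rot_apply1]; ring

lemma rot_ne_zero {w : Pt} (hw : w ≠ 0) : rot w ≠ 0 := by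
  intro h
  apply hw
  apply pt_ext
  intro k
  fin_cases k
  · have := congrArg (fun z : Pt => z 1) h
    simpa [rot_apply1] using this
  · have := congrArg (fun z : Pt => z 0) h
    simpa [rot_apply0] using this

lemma wcoord_ne {w : Pt} (hw : w ≠ 0) : ¬ (w 0 = 0 ∧ w 1 = 0) := by
  rintro ⟨h0, h1⟩
  apply hw
  apply pt_ext
  intro k
  fin_cases k <;> simpa [h0, h1]

lemma span_of_inner_eq_zero {w : Pt} (hw : w ≠ 0) (y : Pt) (hy : ⟪y, w⟫ = 0) :
    ∃ t : ℝ, y = t • rot w := by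
  have hc := wcoord_ne hw
  have hss : w 0 ^ 2 + w 1 ^ 2 ≠ 0 := by
    intro h
    exact hc ⟨by nlinarith [sq_nonneg (w 0), sq_nonneg (w 1)], by nlinarith [sq_nonneg (w 0), sq_nonneg (w 1)]⟩
  rw [pt_inner] at hy
  set t := (-(y 0) * w 1 + y 1 * w 0) / (w 0 ^ 2 + w 1 ^ 2) with hT
  have hsmul : ∀ (c : ℝ) (z : Pt) (k : Fin 2), (c • z) k = c * z k := fun c z k => rfl
  have e0 : y 0 = (t • rot w) 0 := by
    rw [hsmul, rot_apply0, hT]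
    field_simp
    linear_combination (w 0) * hy
  have e1 : y 1 = (t • rot w) 1 := by
    rw [hsmul, rot_apply1, hT]
    field_simp
    linear_combination (w 1) * hy
  refine ⟨t, pt_ext fun k => ?_⟩
  fin_cases k
  · exact e0
  · exact e1


def Fq {n : ℕ} (p : Fin n → Pt) (k m : Fin n) (x : Pt) : ℝ :=
  2*⟪x, p k - p m⟫ + ‖p m‖^2 - ‖p k‖^2

lemma dist_sq (x y : Pt) : dist x y ^2 = ‖x‖^2 - 2*⟪x,y⟫ + ‖y‖^2 := by
  rw [dist_eq_norm, norm_sub_sq_real]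

lemma Fq_eq {n : ℕ} (p : Fin n → Pt) (k m : Fin n) (x : Pt) :
    Fq p k m x = dist x (p m)^2 - dist x (p k)^2 := by
  rw [dist_sq, dist_sq, Fq, inner_sub_right]; ring

lemma dist_lt_iff {n : ℕ} (p : Fin n → Pt) (k m : Fin n) (x : Pt) :
    dist x (p k) < dist x (p m) ↔ 0 < Fq p k m x := by
  rw [Fq_eq]
  have h1 := dist_nonneg (x := x) (y := p k)
  have h2 := dist_nonneg (x := x) (y := p m)
  constructor
  · intro h; nlinarith
  · intro h; nlinarith

lemma dist_eq_iff {n : ℕ} (p : Fin n → Pt) (k m : Fin n) (x : Pt) :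
    dist x (p k) = dist x (p m) ↔ Fq p k m x = 0 := by
  rw [Fq_eq]
  have h1 := dist_nonneg (x := x) (y := p k)
  have h2 := dist_nonneg (x := x) (y := p m)
  constructor
  · intro h; nlinarith
  · intro h; nlinarith

lemma codeMono {n : ℕ} (p : Fin n → Pt) (x : Pt) (k m : Fin n)
    (h : dist x (p k) < dist x (p m)) : code p x m < code p x k := by
  classical
  set Ak := {l : Fin n | l ≠ k ∧ dist x (p k) < dist x (p l)} with hAk
  set Am := {l : Fin n | l ≠ m ∧ dist x (p m) < dist x (p l)} with hAm
  set Tm := {l : Fin n | l ≠ m ∧ dist x (p l) = dist x (p m)} with hTm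
  set Tk := {l : Fin n | l ≠ k ∧ dist x (p l) = dist x (p k)} with hTk
  have hsub : insert m (Am ∪ Tm) ⊆ Ak := by
    intro l hl
    rcases Set.mem_insert_iff.mp hl with rfl | hl
    · exact ⟨fun he => absurd h (by rw [he]; exact lt_irrefl _), h⟩
    · rcases hl with hl | hl
      · obtain ⟨hlm, hld⟩ := hl
        have : dist x (p k) < dist x (p l) := h.trans hld
        exact ⟨fun he => absurd this (by rw [he]; exact lt_irrefl _), this⟩
      · obtain ⟨hlm, hld⟩ := hl
        have : dist x (p k) < dist x (p l) := by rw [hld]; exact h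
        exact ⟨fun he => absurd this (by rw [he]; exact lt_irrefl _), this⟩
  have hmnot : m ∉ Am ∪ Tm := by
    rintro (⟨hm, _⟩ | ⟨hm, _⟩) <;> exact hm rfl
  have hdisj : Disjoint Am Tm := by
    rw [Set.disjoint_left]
    rintro l ⟨_, h1⟩ ⟨_, h2⟩
    exact absurd h1 (by rw [h2]; exact lt_irrefl _)
  have hcard : Am.ncard + Tm.ncard + 1 ≤ Ak.ncard := by
    have h1 : (insert m (Am ∪ Tm)).ncard = Am.ncard + Tm.ncard + 1 := by
      rw [Set.ncard_insert_of_notMem hmnot ((Am ∪ Tm).toFinite),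
        Set.ncard_union_eq hdisj (Set.toFinite _) (Set.toFinite _)]
    rw [← h1]
    exact Set.ncard_le_ncard hsub (Set.toFinite _)
  rw [code, code]
  have h2 : (0:ℚ) ≤ (Tk.ncard : ℚ) := by positivity
  have h3 : ((Am.ncard : ℚ) + Tm.ncard + 1) ≤ (Ak.ncard : ℚ) := by exact_mod_cast hcard
  have h4 : (0:ℚ) ≤ (Tm.ncard : ℚ) := by positivity
  linarith


def EdgeAt {n : ℕ} (p : Fin n → Pt) (x : Pt) (i j : Fin n) : Prop :=
  Tie p x i j ∧ ∀ u v, Tie p x u v → ({u, v} : Set (Fin n)) = {i, j}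

lemma edgeAt_symm {n : ℕ} {p : Fin n → Pt} {x : Pt} {i j : Fin n}
    (h : EdgeAt p x i j) : EdgeAt p x j i := by
  obtain ⟨⟨hij, hd⟩, hall⟩ := h
  exact ⟨⟨hij.symm, hd.symm⟩, fun u v huv => by rw [hall u v huv, Set.pair_comm]⟩

def NonIntSet {n : ℕ} (c : Fin n → ℚ) : Set (Fin n) := {k | ∀ m : ℤ, c k ≠ m}

lemma pair_mem_resolve {α : Type*} {u i j : α} (h : u ∈ ({i, j} : Set α)) :
    u = i ∨ u = j := h

lemma edgeAt_tieSets {n : ℕ} {p : Fin n → Pt} {x : Pt} {i j : Fin n}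
    (h : EdgeAt p x i j) :
    {m : Fin n | m ≠ i ∧ dist x (p m) = dist x (p i)} = {j} ∧
    (∀ k, k ≠ i → k ≠ j → {m : Fin n | m ≠ k ∧ dist x (p m) = dist x (p k)} = ∅) := by
  obtain ⟨⟨hij, hd⟩, hall⟩ := h
  constructor
  · ext m
    simp only [Set.mem_setOf_eq, Set.mem_singleton_iff]
    constructor
    · rintro ⟨hmi, hdm⟩
      have := hall i m ⟨fun he => hmi he.symm, hdm.symm⟩
      have hm : m ∈ ({i, j} : Set (Fin n)) := this ▸ (by right; rfl)
      rcases pair_mem_resolve hm with rfl | rfl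
      · exact absurd rfl hmi
      · rfl
    · rintro rfl; exact ⟨hij.symm, hd.symm⟩
  · intro k hki hkj
    ext m
    simp only [Set.mem_setOf_eq, Set.mem_empty_iff_false, iff_false, not_and]
    intro hmk hdm
    have := hall k m ⟨fun he => hmk he.symm, hdm.symm⟩
    have hk : k ∈ ({i, j} : Set (Fin n)) := this ▸ (by left; rfl)
    rcases pair_mem_resolve hk with rfl | rfl
    · exact hki rfl
    · exact hkj rfl

lemma half_not_int (A : ℕ) : ∀ m : ℤ, (A : ℚ) + (1/2) * 1 ≠ m := by
  intro m hm
  have h2 : (2 * m : ℚ) = 2 * A + 1 := by linarith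
  have h3 : 2 * m = 2 * (A:ℤ) + 1 := by exact_mod_cast h2
  omega

lemma edgeAt_nonIntSet {n : ℕ} {p : Fin n → Pt} {x : Pt} {i j : Fin n}
    (h : EdgeAt p x i j) : NonIntSet (code p x) = {i, j} := by
  have hi := (edgeAt_tieSets h).1
  have hj := (edgeAt_tieSets (edgeAt_symm h)).1
  have hk := (edgeAt_tieSets h).2
  have hij := h.1.1
  ext k
  simp only [NonIntSet, Set.mem_setOf_eq, Set.mem_insert_iff, Set.mem_singleton_iff]
  constructor
  · intro hni
    by_contra hcon
    push_neg at hcon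
    obtain ⟨hki, hkj⟩ := hcon
    have : code p x k = ({m : Fin n | m ≠ k ∧ dist x (p k) < dist x (p m)}.ncard : ℚ) := by
      rw [code, hk k hki hkj]; simp
    exact hni ({m : Fin n | m ≠ k ∧ dist x (p k) < dist x (p m)}.ncard : ℤ) (by rw [this]; push_cast; rfl)
  · rintro (rfl | rfl)
    · rw [code, hi]
      simpa using half_not_int {m : Fin n | m ≠ k ∧ dist x (p k) < dist x (p m)}.ncard
    · rw [code, hj]
      simpa using half_not_int {m : Fin n | m ≠ k ∧ dist x (p k) < dist x (p m)}.ncard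

def cnt (V : Finset ℝ) (t : ℝ) : ℕ := (V.filter (fun v => v < t)).card

lemma cnt_le (V : Finset ℝ) (t : ℝ) : cnt V t ≤ V.card := Finset.card_filter_le _ _

lemma sides_of_cnt_eq {V : Finset ℝ} {t t' : ℝ} (ht : t ∉ V) (ht' : t' ∉ V)
    (h : cnt V t = cnt V t') : ∀ v ∈ V, (t < v ↔ t' < v) := by
  have key : ∀ a b : ℝ, a ∉ V → b ∉ V → a ≤ b → cnt V a = cnt V b →
      ∀ v ∈ V, (a < v ↔ b < v) := by
    intro a b ha hb hab hcnt v hv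
    have hsub : V.filter (fun w => w < a) ⊆ V.filter (fun w => w < b) := by
      intro w hw
      rw [Finset.mem_filter] at hw ⊢
      exact ⟨hw.1, lt_of_lt_of_le hw.2 hab⟩
    have heq : V.filter (fun w => w < a) = V.filter (fun w => w < b) :=
      Finset.eq_of_subset_of_card_le hsub (le_of_eq hcnt.symm)
    constructor
    · intro hav
      by_contra hbv
      push_neg at hbv
      have hvb : v < b := lt_of_le_of_ne hbv (fun he => hb (he ▸ hv))
      have : v ∈ V.filter (fun w => w < a) := heq ▸ (Finset.mem_filter.mpr ⟨hv, hvb⟩)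
      exact absurd (Finset.mem_filter.mp this).2 (not_lt.mpr (le_of_lt hav))
    · intro hbv; exact lt_of_le_of_lt hab hbv
  rcases le_total t t' with hle | hle
  · exact key t t' ht ht' hle h
  · intro v hv; exact (key t' t ht' ht hle h.symm v hv).symm

lemma cnt_eq_of_sides {V : Finset ℝ} {t t' : ℝ} (ht : t ∉ V) (ht' : t' ∉ V)
    (h : ∀ v ∈ V, (t < v ↔ t' < v)) : cnt V t = cnt V t' := by
  unfold cnt
  congr 1
  apply Finset.filter_congr
  intro v hv
  have hvt : v ≠ t := fun he => ht (he ▸ hv)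
  have hvt' : v ≠ t' := fun he => ht' (he ▸ hv)
  constructor
  · intro hlt
    rcases lt_trichotomy v t' with h1 | h1 | h1
    · exact h1
    · exact absurd h1 hvt'
    · exact absurd ((h v hv).mpr h1) (not_lt.mpr (le_of_lt hlt))
  · intro hlt
    rcases lt_trichotomy v t with h1 | h1 | h1
    · exact h1
    · exact absurd h1 hvt
    · exact absurd ((h v hv).mp h1) (not_lt.mpr (le_of_lt hlt))

lemma exists_cnt (V : Finset ℝ) : ∀ q, q ≤ V.card → ∃ t, t ∉ V ∧ cnt V t = q := by
  intro q
  induction q with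
  | zero =>
    intro _
    by_cases h : V.Nonempty
    · refine ⟨V.min' h - 1, fun hc => ?_, ?_⟩
      · have := V.min'_le _ hc; linarith
      · rw [cnt, Finset.card_eq_zero, Finset.filter_eq_empty_iff]
        intro v hv
        have := V.min'_le v hv
        push_neg
        linarith
    · rw [Finset.not_nonempty_iff_eq_empty] at h
      exact ⟨0, by simp [h, cnt]⟩
  | succ q ih =>
    intro hq
    obtain ⟨t, ht, hcnt⟩ := ih (le_of_lt (Nat.lt_of_succ_le hq))
    have hW : (V.filter (fun v => t < v)).Nonempty := by
      by_contra hc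
      rw [Finset.not_nonempty_iff_eq_empty, Finset.filter_eq_empty_iff] at hc
      have : V.filter (fun v => v < t) = V := by
        apply Finset.filter_true_of_mem
        intro v hv
        rcases lt_trichotomy v t with h1 | h1 | h1
        · exact h1
        · exact absurd (h1 ▸ hv) ht
        · exact absurd h1 (hc hv)
      rw [cnt, this] at hcnt
      omega
    set m := (V.filter (fun v => t < v)).min' hW with hm
    have hmV : m ∈ V ∧ t < m := by
      have := (V.filter (fun v => t < v)).min'_mem hW
      rw [Finset.mem_filter] at this
      exact this
    have hmmin : ∀ v ∈ V, t < v → m ≤ v := by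
      intro v hv hvt
      exact Finset.min'_le _ _ (Finset.mem_filter.mpr ⟨hv, hvt⟩)
    have hex : ∃ u, m < u ∧ ∀ v ∈ V, m < v → u ≤ v := by
      by_cases h : (V.filter (fun v => m < v)).Nonempty
      · exact ⟨_, (Finset.mem_filter.mp ((V.filter (fun v => m < v)).min'_mem h)).2,
          fun v hv hmv => Finset.min'_le _ _ (Finset.mem_filter.mpr ⟨hv, hmv⟩)⟩
      · exact ⟨m + 2, by linarith, fun v hv hmv =>
          absurd ⟨v, Finset.mem_filter.mpr ⟨hv, hmv⟩⟩ h⟩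
    obtain ⟨u, hmu, humin⟩ := hex
    refine ⟨(m + u) / 2, ?_, ?_⟩
    · intro hc
      have h1 : m < (m + u) / 2 := by linarith
      have h2 : (m + u) / 2 < u := by linarith
      exact absurd (humin _ hc h1) (not_le.mpr h2)
    · have hset : V.filter (fun v => v < (m + u) / 2) = insert m (V.filter (fun v => v < t)) := by
        ext v
        rw [Finset.mem_filter, Finset.mem_insert, Finset.mem_filter]
        constructor
        · rintro ⟨hv, hvlt⟩
          rcases lt_trichotomy v m with h1 | h1 | h1
          · right
            refine ⟨hv, ?_⟩
            rcases lt_trichotomy v t with h2 | h2 | h2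
            · exact h2
            · exact absurd (h2 ▸ hv) ht
            · exact absurd h1 (not_lt.mpr (hmmin v hv h2))
          · exact Or.inl h1
          · exact absurd (humin v hv h1) (not_le.mpr (by linarith))
        · rintro (rfl | ⟨hv, hvt⟩)
          · exact ⟨hmV.1, by linarith⟩
          · exact ⟨hv, by linarith [hmV.2]⟩
      rw [cnt, hset, Finset.card_insert_of_notMem, ← cnt, hcnt]
      rw [Finset.mem_filter]
      rintro ⟨_, hc⟩
      linarith [hmV.2]


section Pair
variable {n : ℕ} (p : Fin n → Pt) (i j : Fin n)

def c0 : Pt := midpoint ℝ (p i) (p j)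
def dv : Pt := rot (p j - p i)
def Xp (t : ℝ) : Pt := c0 p i j + t • dv p i j
def Bc (k m : Fin n) : ℝ := 2 * ⟪dv p i j, p k - p m⟫
def Ac (k m : Fin n) : ℝ := Fq p k m (c0 p i j)
def rc (k m : Fin n) : ℝ := -(Ac p i j k m) / (Bc p i j k m)
def Qs : Finset (Fin n × Fin n) :=
  Finset.univ.filter (fun q => q.1 < q.2 ∧ q.1 ≠ j ∧ q.2 ≠ j)
def Vs : Finset ℝ := (Qs (n := n) j).image (fun q => rc p i j q.1 q.2)

lemma F_line (k m : Fin n) (t : ℝ) :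
    Fq p k m (Xp p i j t) = Ac p i j k m + t * Bc p i j k m := by
  rw [Fq, Xp, Ac, Bc, Fq, inner_add_left, real_inner_smul_left]
  ring

lemma Fq_neg (k m : Fin n) (x : Pt) : Fq p m k x = - Fq p k m x := by
  rw [Fq, Fq, inner_sub_right, inner_sub_right]
  ring

lemma Ac_ij_zero : Ac p i j i j = 0 := by
  rw [Ac, ← dist_eq_iff, c0, dist_midpoint_left, dist_midpoint_right]

lemma Bc_ij_zero : Bc p i j i j = 0 := by
  rw [Bc, show p i - p j = -(p j - p i) from (neg_sub _ _).symm, inner_neg_right, dv, inner_rot]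
  ring

lemma line_dist (t : ℝ) : dist (Xp p i j t) (p i) = dist (Xp p i j t) (p j) := by
  rw [dist_eq_iff, F_line, Ac_ij_zero, Bc_ij_zero]
  ring

variable {p i j}

lemma w_ne_zero (hp : Function.Injective p) (hij : i ≠ j) : p j - p i ≠ 0 := by
  rw [sub_ne_zero]
  exact fun h => hij (hp h).symm

lemma dv_ne_zero (hp : Function.Injective p) (hij : i ≠ j) : dv p i j ≠ 0 :=
  rot_ne_zero (w_ne_zero hp hij)

lemma Xp_inj (hp : Function.Injective p) (hij : i ≠ j) {t t' : ℝ}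
    (h : Xp p i j t = Xp p i j t') : t = t' := by
  rw [Xp, Xp] at h
  have h2 : t • dv p i j = t' • dv p i j := by rwa [add_right_inj] at h
  have h3 : (t - t') • dv p i j = 0 := by rw [sub_smul, h2, sub_self]
  rcases smul_eq_zero.mp h3 with h4 | h4
  · linarith [sub_eq_zero.mp h4]
  · exact absurd h4 (dv_ne_zero hp hij)

lemma mem_line (hp : Function.Injective p) (hij : i ≠ j) {x : Pt}
    (h : dist x (p i) = dist x (p j)) : ∃ t, x = Xp p i j t := by
  have h0 : Fq p i j x = 0 := (dist_eq_iff p i j x).mp h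
  have hc0 : Fq p i j (c0 p i j) = 0 := Ac_ij_zero p i j
  have hdiff : ⟪x - c0 p i j, p i - p j⟫ = 0 := by
    rw [Fq] at h0 hc0
    rw [inner_sub_left]
    linarith
  have hw : ⟪x - c0 p i j, p j - p i⟫ = 0 := by
    rw [show p j - p i = -(p i - p j) from (neg_sub _ _).symm, inner_neg_right, hdiff, neg_zero]
  obtain ⟨t, ht⟩ := span_of_inner_eq_zero (w_ne_zero hp hij) _ hw
  refine ⟨t, ?_⟩
  unfold Xp dv
  rw [← ht]
  abel

lemma Bc_ne (hp : Function.Injective p) (hij : i ≠ j) (hgp : GeneralPosition p)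
    {k m : Fin n} (hkm : k ≠ m)
    (hs : ({k, m} : Set (Fin n)) ≠ {i, j}) : Bc p i j k m ≠ 0 := by
  intro hB
  obtain ⟨x₀, ⟨hx1, hx2⟩, huniq⟩ := hgp.2 i j k m hij hkm (fun he => hs he.symm)
  obtain ⟨t₀, rfl⟩ := mem_line hp hij hx1
  have hA : Ac p i j k m = 0 := by
    have := (dist_eq_iff p k m _).mp hx2
    rw [F_line, hB] at this
    linarith
  have hall : ∀ t, dist (Xp p i j t) (p i) = dist (Xp p i j t) (p j) ∧
      dist (Xp p i j t) (p k) = dist (Xp p i j t) (p m) := by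
    intro t
    refine ⟨line_dist p i j t, ?_⟩
    rw [dist_eq_iff, F_line, hA, hB]
    ring
  have h01 : Xp p i j 0 = Xp p i j 1 := by
    rw [huniq _ (hall 0), huniq _ (hall 1)]
  exact absurd (Xp_inj hp hij h01) (by norm_num)

lemma root_iff (hp : Function.Injective p) (hij : i ≠ j) (hgp : GeneralPosition p)
    {k m : Fin n} (hkm : k ≠ m)
    (hs : ({k, m} : Set (Fin n)) ≠ {i, j}) (t : ℝ) :
    Fq p k m (Xp p i j t) = 0 ↔ t = rc p i j k m := by
  have hB := Bc_ne hp hij hgp hkm hs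
  rw [F_line, rc]
  constructor
  · intro h
    field_simp
    linarith
  · intro h
    rw [h]
    field_simp
    ring

lemma F_sign (hp : Function.Injective p) (hij : i ≠ j) (hgp : GeneralPosition p)
    {k m : Fin n} (hkm : k ≠ m)
    (hs : ({k, m} : Set (Fin n)) ≠ {i, j}) (t : ℝ) :
    Fq p k m (Xp p i j t) = Bc p i j k m * (t - rc p i j k m) := by
  have hB := Bc_ne hp hij hgp hkm hs
  rw [F_line, rc]
  field_simp
  ring

lemma rc_symm (k m : Fin n) : rc p i j k m = rc p i j m k := by
  have hA : Ac p i j m k = - Ac p i j k m := by rw [Ac, Ac, Fq_neg]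
  have hB : Bc p i j m k = - Bc p i j k m := by
    rw [Bc, Bc, show p m - p k = -(p k - p m) from (neg_sub _ _).symm, inner_neg_right]
    ring
  rw [rc, rc, hA, hB]
  rw [neg_neg, div_neg, neg_div]

lemma pair_ne_left {α : Type*} {a b c d : α} (h : c ∉ ({a, b} : Set α)) :
    ({a, b} : Set α) ≠ {c, d} := fun he => h (he.symm ▸ (Set.mem_insert c {d}))

lemma pair_ne_right {α : Type*} {a b c d : α} (h : d ∉ ({a, b} : Set α)) :
    ({a, b} : Set α) ≠ {c, d} := fun he => h (he.symm ▸ (Set.mem_insert_of_mem c rfl))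

lemma not_mem_pair {α : Type*} {a b c : α} (h1 : c ≠ a) (h2 : c ≠ b) :
    c ∉ ({a, b} : Set α) := by
  simp only [Set.mem_insert_iff, Set.mem_singleton_iff]
  push_neg
  exact ⟨h1, h2⟩

lemma collapse (hp : Function.Injective p) (hij : i ≠ j) (hgp : GeneralPosition p)
    {k : Fin n} (hki : k ≠ i) (hkj : k ≠ j) :
    rc p i j j k = rc p i j i k := by
  have hjk : j ≠ k := hkj.symm
  have hik : i ≠ k := hki.symm
  have hs1 : ({j, k} : Set (Fin n)) ≠ {i, j} := pair_ne_left (not_mem_pair hij hik)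
  have hs2 : ({i, k} : Set (Fin n)) ≠ {i, j} := pair_ne_right (not_mem_pair hij.symm hkj.symm)
  set t := rc p i j j k with ht
  have h1 : Fq p j k (Xp p i j t) = 0 := (root_iff hp hij hgp hjk hs1 t).mpr rfl
  have hd1 : dist (Xp p i j t) (p j) = dist (Xp p i j t) (p k) := (dist_eq_iff p j k _).mpr h1
  have hd2 : dist (Xp p i j t) (p i) = dist (Xp p i j t) (p k) :=
    (line_dist p i j t).trans hd1
  exact (root_iff hp hij hgp hik hs2 t).mp ((dist_eq_iff p i k _).mp hd2)

lemma mem_V_aux {a b : Fin n} (hab : a ≠ b) (haj : a ≠ j) (hbj : b ≠ j) :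
    rc p i j a b ∈ Vs p i j := by
  rcases lt_or_gt_of_ne hab with h | h
  · exact Finset.mem_image.mpr ⟨(a, b), Finset.mem_filter.mpr ⟨Finset.mem_univ _, h, haj, hbj⟩, rfl⟩
  · rw [rc_symm]
    exact Finset.mem_image.mpr ⟨(b, a), Finset.mem_filter.mpr ⟨Finset.mem_univ _, h, hbj, haj⟩, rfl⟩

lemma mem_V (hp : Function.Injective p) (hij : i ≠ j) (hgp : GeneralPosition p)
    {k m : Fin n} (hkm : k ≠ m)
    (hs : ({k, m} : Set (Fin n)) ≠ {i, j}) : rc p i j k m ∈ Vs p i j := by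
  by_cases hkj : k = j
  · subst hkj
    have hmj : m ≠ k := hkm.symm
    have hmi : m ≠ i := by
      intro he
      subst he
      exact hs (Set.pair_comm k m)
    rw [collapse hp hij hgp hmi hkm.symm]
    exact mem_V_aux (Ne.symm hmi) hij (hkm.symm)
  · by_cases hmj : m = j
    · subst hmj
      have hki : k ≠ i := by
        intro he
        subst he
        exact hs rfl
      rw [rc_symm, collapse hp hij hgp hki hkj]
      exact mem_V_aux (Ne.symm hki) hij hkj
    · exact mem_V_aux hkm hkj hmj


end Pair

section Pair2
variable {n : ℕ} {p : Fin n → Pt} {i j : Fin n}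

lemma set_pair_to_finset {a b c d : Fin n} (h : ({a, b} : Set (Fin n)) = {c, d}) :
    ({a, b} : Finset (Fin n)) = {c, d} := by
  apply Finset.coe_injective
  simpa using h

lemma pair_lt_eq {a b c d : Fin n} (hab : a < b) (hcd : c < d)
    (h : ({a, b} : Finset (Fin n)) = {c, d}) : a = c ∧ b = d := by
  have ha : a ∈ ({c, d} : Finset (Fin n)) := h ▸ Finset.mem_insert_self a {b}
  have hb : b ∈ ({c, d} : Finset (Fin n)) := h ▸ Finset.mem_insert_of_mem (Finset.mem_singleton_self b)
  have hc : c ∈ ({a, b} : Finset (Fin n)) := h ▸ Finset.mem_insert_self c {d}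
  rw [Finset.mem_insert, Finset.mem_singleton] at ha hb hc
  rcases ha with h1 | h1
  · refine ⟨h1, ?_⟩
    rcases hb with h2 | h2
    · exact absurd (h1.trans h2.symm) (ne_of_lt hab)
    · exact h2
  · rcases hc with h2 | h2
    · exact absurd (h2.trans h1) (ne_of_lt hcd)
    · exfalso
      have h3 : a < c := hab.trans_eq h2.symm
      have h4 : c < a := hcd.trans_eq h1.symm
      exact lt_irrefl a (h3.trans h4)

lemma triple_unique (hij : i ≠ j) (hgp : GeneralPosition p) {x : Pt}
    (hx : dist x (p i) = dist x (p j))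
    {k m k' m' : Fin n} (hkm : k ≠ m) (hk'm' : k' ≠ m') (hkj : k ≠ j) (hmj : m ≠ j)
    (hk'j : k' ≠ j) (hm'j : m' ≠ j)
    (h1 : dist x (p k) = dist x (p m)) (h2 : dist x (p k') = dist x (p m')) :
    ({k, m} : Finset (Fin n)) = {k', m'} := by
  have tij : Tie p x i j := ⟨hij, hx⟩
  have t1 : Tie p x k m := ⟨hkm, h1⟩
  have t2 : Tie p x k' m' := ⟨hk'm', h2⟩
  have hsne1 : ({k, m} : Set (Fin n)) ≠ {i, j} :=
    pair_ne_right (not_mem_pair hkj.symm hmj.symm)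
  have hsne2 : ({k', m'} : Set (Fin n)) ≠ {i, j} :=
    pair_ne_right (not_mem_pair hk'j.symm hm'j.symm)
  rcases hgp.1 x with hc | he | h2I | h3I
  · exact absurd tij (hc i j)
  · obtain ⟨a, b, _, hall⟩ := he
    exact absurd ((hall k m t1).trans (hall i j tij).symm) hsne1
  · obtain ⟨a, b, u, v, _, _, _, _, _, _, _, _, hall⟩ := h2I
    rcases hall k m t1 with hA | hA <;> rcases hall k' m' t2 with hB | hB <;>
      rcases hall i j tij with hC | hC
    · exact set_pair_to_finset (hA.trans hB.symm)
    · exact set_pair_to_finset (hA.trans hB.symm)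
    · exact absurd (hA.trans hC.symm) hsne1
    · exact absurd (hB.trans hC.symm) hsne2
    · exact absurd (hB.trans hC.symm) hsne2
    · exact absurd (hA.trans hC.symm) hsne1
    · exact set_pair_to_finset (hA.trans hB.symm)
    · exact set_pair_to_finset (hA.trans hB.symm)
  · obtain ⟨a, b, c, hab, hac, hbc, hiff⟩ := h3I
    set T : Finset (Fin n) := {a, b, c} with hT
    have hmemT : ∀ u v : Fin n, Tie p x u v → u ∈ T ∧ v ∈ T := by
      intro u v huv
      obtain ⟨_, hu, hv⟩ := (hiff u v).mp huv
      constructor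
      · rcases hu with h | h | h <;> subst h <;> simp [hT]
      · rcases hv with h | h | h <;> subst h <;> simp [hT]
    have hTcard : T.card = 3 := by
      rw [hT]
      rw [Finset.card_insert_of_notMem (by simp [hab, hac]),
        Finset.card_insert_of_notMem (by simp [hbc])]
      rfl
    have hjT : j ∈ T := (hmemT i j tij).2
    have herase : (T.erase j).card = 2 := by
      rw [Finset.card_erase_of_mem hjT, hTcard]
    have hsub : ∀ u v : Fin n, Tie p x u v → u ≠ j → v ≠ j →
        ({u, v} : Finset (Fin n)) = T.erase j := by
      intro u v huv huj hvj
      apply Finset.eq_of_subset_of_card_le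
      · intro z hz
        rw [Finset.mem_insert, Finset.mem_singleton] at hz
        rcases hz with h | h
        · rw [h]; exact Finset.mem_erase.mpr ⟨huj, (hmemT u v huv).1⟩
        · rw [h]; exact Finset.mem_erase.mpr ⟨hvj, (hmemT u v huv).2⟩
      · rw [herase, Finset.card_insert_of_notMem (by simp [huv.1]), Finset.card_singleton]
    rw [hsub k m t1 hkj hmj, hsub k' m' t2 hk'j hm'j]

lemma tie_at_param (hp : Function.Injective p) (hij : i ≠ j) (hgp : GeneralPosition p)
    {k m : Fin n} (hkm : k ≠ m) (hs : ({k, m} : Set (Fin n)) ≠ {i, j}) {t : ℝ}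
    (ht : t = rc p i j k m) :
    dist (Xp p i j t) (p k) = dist (Xp p i j t) (p m) :=
  (dist_eq_iff p k m _).mpr ((root_iff hp hij hgp hkm hs t).mpr ht)

lemma rc_injOn (hp : Function.Injective p) (hij : i ≠ j) (hgp : GeneralPosition p) :
    Set.InjOn (fun q : Fin n × Fin n => rc p i j q.1 q.2) ↑(Qs (n := n) j) := by
  intro q hq q' hq' heqq
  have heq : rc p i j q.1 q.2 = rc p i j q'.1 q'.2 := heqq
  simp only [Finset.coe_filter, Set.mem_setOf_eq, Qs, Finset.mem_coe, Finset.mem_filter] at hq hq'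
  obtain ⟨_, hlt, h1j, h2j⟩ := hq
  obtain ⟨_, hlt', h1j', h2j'⟩ := hq'
  have hkm : q.1 ≠ q.2 := ne_of_lt hlt
  have hk'm' : q'.1 ≠ q'.2 := ne_of_lt hlt'
  have hs : ({q.1, q.2} : Set (Fin n)) ≠ {i, j} :=
    pair_ne_right (not_mem_pair (Ne.symm h1j) (Ne.symm h2j))
  have hs' : ({q'.1, q'.2} : Set (Fin n)) ≠ {i, j} :=
    pair_ne_right (not_mem_pair (Ne.symm h1j') (Ne.symm h2j'))
  set t := rc p i j q.1 q.2 with htdef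
  have hd1 : dist (Xp p i j t) (p q.1) = dist (Xp p i j t) (p q.2) :=
    tie_at_param hp hij hgp hkm hs rfl
  have hd2 : dist (Xp p i j t) (p q'.1) = dist (Xp p i j t) (p q'.2) :=
    tie_at_param hp hij hgp hk'm' hs' (htdef.trans heq)
  have hfin : ({q.1, q.2} : Finset (Fin n)) = {q'.1, q'.2} :=
    triple_unique hij hgp (line_dist p i j t) hkm hk'm' h1j h2j h1j' h2j' hd1 hd2
  obtain ⟨he1, he2⟩ := pair_lt_eq hlt hlt' hfin
  exact Prod.ext he1 he2

lemma Qs_card : (Qs (n := n) j).card = (n - 1).choose 2 := by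
  rw [show (n-1).choose 2 = ((Finset.univ.erase j).powersetCard 2).card by
    rw [Finset.card_powersetCard, Finset.card_erase_of_mem (Finset.mem_univ j),
      Finset.card_univ, Fintype.card_fin]]
  apply Finset.card_bij (fun q _ => ({q.1, q.2} : Finset (Fin n)))
  · intro q hq
    rw [Qs, Finset.mem_filter] at hq
    obtain ⟨_, hlt, h1j, h2j⟩ := hq
    rw [Finset.mem_powersetCard]
    constructor
    · intro z hz
      rw [Finset.mem_insert, Finset.mem_singleton] at hz
      rcases hz with rfl | rfl
      · exact Finset.mem_erase.mpr ⟨h1j, Finset.mem_univ _⟩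
      · exact Finset.mem_erase.mpr ⟨h2j, Finset.mem_univ _⟩
    · rw [Finset.card_insert_of_notMem (by simp [ne_of_lt hlt]), Finset.card_singleton]
  · intro q hq q' hq' he
    rw [Qs, Finset.mem_filter] at hq hq'
    obtain ⟨he1, he2⟩ := pair_lt_eq hq.2.1 hq'.2.1 he
    exact Prod.ext he1 he2
  · intro s hs
    rw [Finset.mem_powersetCard] at hs
    obtain ⟨hsub, hcard⟩ := hs
    obtain ⟨a, b, hab, rfl⟩ := Finset.card_eq_two.mp hcard
    have haj : a ≠ j := (Finset.mem_erase.mp (hsub (Finset.mem_insert_self a {b}))).1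
    have hbj : b ≠ j :=
      (Finset.mem_erase.mp (hsub (Finset.mem_insert_of_mem (Finset.mem_singleton_self b)))).1
    rcases lt_or_gt_of_ne hab with h | h
    · exact ⟨(a, b), Finset.mem_filter.mpr ⟨Finset.mem_univ _, h, haj, hbj⟩, rfl⟩
    · exact ⟨(b, a), Finset.mem_filter.mpr ⟨Finset.mem_univ _, h, hbj, haj⟩,
        by rw [Finset.pair_comm]⟩

lemma Vs_card (hp : Function.Injective p) (hij : i ≠ j) (hgp : GeneralPosition p) :
    (Vs p i j).card = (n - 1).choose 2 := by
  rw [Vs, Finset.card_image_of_injOn (rc_injOn hp hij hgp), Qs_card]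

lemma edgeAt_of_not_mem (hp : Function.Injective p) (hij : i ≠ j) (hgp : GeneralPosition p)
    {t : ℝ} (ht : t ∉ Vs p i j) : EdgeAt p (Xp p i j t) i j := by
  refine ⟨⟨hij, line_dist p i j t⟩, ?_⟩
  rintro u v ⟨huv, hd⟩
  by_contra hne
  have hroot : t = rc p i j u v :=
    (root_iff hp hij hgp huv hne t).mp ((dist_eq_iff p u v _).mp hd)
  exact ht (hroot ▸ mem_V hp hij hgp huv hne)

lemma edgeAt_param (hp : Function.Injective p) (hij : i ≠ j) (hgp : GeneralPosition p)
    {x : Pt} (hx : EdgeAt p x i j) : ∃ t, t ∉ Vs p i j ∧ x = Xp p i j t := by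
  obtain ⟨t, rfl⟩ := mem_line hp hij hx.1.2
  refine ⟨t, ?_, rfl⟩
  intro htV
  obtain ⟨q, hq, hrc⟩ := Finset.mem_image.mp htV
  rw [Qs, Finset.mem_filter] at hq
  obtain ⟨_, hlt, h1j, h2j⟩ := hq
  have hs : ({q.1, q.2} : Set (Fin n)) ≠ {i, j} :=
    pair_ne_right (not_mem_pair (Ne.symm h1j) (Ne.symm h2j))
  have hd : dist (Xp p i j t) (p q.1) = dist (Xp p i j t) (p q.2) :=
    tie_at_param hp hij hgp (ne_of_lt hlt) hs hrc.symm
  exact hs (hx.2 q.1 q.2 ⟨ne_of_lt hlt, hd⟩)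

lemma rel_iff (hp : Function.Injective p) (hij : i ≠ j) (hgp : GeneralPosition p)
    {t t' : ℝ} (ht : t ∉ Vs p i j) (ht' : t' ∉ Vs p i j)
    (hsides : ∀ v ∈ Vs p i j, (t < v ↔ t' < v)) (k m : Fin n) :
    (dist (Xp p i j t) (p k) < dist (Xp p i j t) (p m) ↔
      dist (Xp p i j t') (p k) < dist (Xp p i j t') (p m)) ∧
    (dist (Xp p i j t) (p k) = dist (Xp p i j t) (p m) ↔
      dist (Xp p i j t') (p k) = dist (Xp p i j t') (p m)) := by
  by_cases hkm : k = m
  · subst hkm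
    simp
  by_cases hs : ({k, m} : Set (Fin n)) = {i, j}
  · have hzero : ∀ s : ℝ, Fq p k m (Xp p i j s) = 0 := by
      rcases Set.pair_eq_pair_iff.mp hs with ⟨rfl, rfl⟩ | ⟨rfl, rfl⟩
      · intro s
        rw [F_line, Ac_ij_zero, Bc_ij_zero]
        ring
      · intro s
        rw [Fq_neg, F_line, Ac_ij_zero, Bc_ij_zero]
        ring
    constructor
    · rw [dist_lt_iff, dist_lt_iff, hzero, hzero]
    · rw [dist_eq_iff, dist_eq_iff, hzero, hzero]
  · have hr : rc p i j k m ∈ Vs p i j := mem_V hp hij hgp hkm hs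
    have hB : Bc p i j k m ≠ 0 := Bc_ne hp hij hgp hkm hs
    have hFt : Fq p k m (Xp p i j t) = Bc p i j k m * (t - rc p i j k m) :=
      F_sign hp hij hgp hkm hs t
    have hFt' : Fq p k m (Xp p i j t') = Bc p i j k m * (t' - rc p i j k m) :=
      F_sign hp hij hgp hkm hs t'
    have htr : t ≠ rc p i j k m := fun he => ht (he ▸ hr)
    have htr' : t' ≠ rc p i j k m := fun he => ht' (he ▸ hr)
    have hlt1 : t < rc p i j k m ↔ t' < rc p i j k m := hsides _ hr
    have hgt1 : rc p i j k m < t ↔ rc p i j k m < t' := by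
      constructor
      · intro h
        rcases lt_trichotomy t' (rc p i j k m) with h1 | h1 | h1
        · exact absurd (hlt1.mpr h1) (not_lt.mpr (le_of_lt h))
        · exact absurd h1 htr'
        · exact h1
      · intro h
        rcases lt_trichotomy t (rc p i j k m) with h1 | h1 | h1
        · exact absurd (hlt1.mp h1) (not_lt.mpr (le_of_lt h))
        · exact absurd h1 htr
        · exact h1
    constructor
    · rw [dist_lt_iff, dist_lt_iff, hFt, hFt']
      rcases lt_or_gt_of_ne hB with hBn | hBn
      · constructor
        · intro h0
          have : t < rc p i j k m := by nlinarith
          have h2 := hlt1.mp this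
          nlinarith
        · intro h0
          have : t' < rc p i j k m := by nlinarith
          have h2 := hlt1.mpr this
          nlinarith
      · constructor
        · intro h0
          have : rc p i j k m < t := by nlinarith
          have h2 := hgt1.mp this
          nlinarith
        · intro h0
          have : rc p i j k m < t' := by nlinarith
          have h2 := hgt1.mpr this
          nlinarith
    · rw [dist_eq_iff, dist_eq_iff, hFt, hFt']
      constructor
      · intro h0
        rcases mul_eq_zero.mp h0 with h1 | h1
        · exact absurd h1 hB
        · exact absurd (sub_eq_zero.mp h1) htr
      · intro h0
        rcases mul_eq_zero.mp h0 with h1 | h1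
        · exact absurd h1 hB
        · exact absurd (sub_eq_zero.mp h1) htr'

lemma code_eq_of_sides (hp : Function.Injective p) (hij : i ≠ j) (hgp : GeneralPosition p)
    {t t' : ℝ} (ht : t ∉ Vs p i j) (ht' : t' ∉ Vs p i j)
    (hsides : ∀ v ∈ Vs p i j, (t < v ↔ t' < v)) :
    code p (Xp p i j t) = code p (Xp p i j t') := by
  funext k
  rw [code, code]
  have h1 : {m | m ≠ k ∧ dist (Xp p i j t) (p k) < dist (Xp p i j t) (p m)} =
      {m | m ≠ k ∧ dist (Xp p i j t') (p k) < dist (Xp p i j t') (p m)} := by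
    ext m
    exact and_congr_right (fun _ => (rel_iff hp hij hgp ht ht' hsides k m).1)
  have h2 : {m | m ≠ k ∧ dist (Xp p i j t) (p m) = dist (Xp p i j t) (p k)} =
      {m | m ≠ k ∧ dist (Xp p i j t') (p m) = dist (Xp p i j t') (p k)} := by
    ext m
    exact and_congr_right (fun _ => (rel_iff hp hij hgp ht ht' hsides m k).2)
  rw [h1, h2]

lemma sides_of_code_eq (hp : Function.Injective p) (hij : i ≠ j) (hgp : GeneralPosition p)
    {t t' : ℝ} (ht : t ∉ Vs p i j) (ht' : t' ∉ Vs p i j)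
    (hcode : code p (Xp p i j t) = code p (Xp p i j t')) :
    ∀ v ∈ Vs p i j, (t < v ↔ t' < v) := by
  have aux : ∀ s s' : ℝ, s ∉ Vs p i j → s' ∉ Vs p i j →
      code p (Xp p i j s) = code p (Xp p i j s') →
      ∀ v ∈ Vs p i j, s < v → ¬ (v < s') := by
    intro s s' hsV hs'V hc v hv hsv hvs'
    obtain ⟨q, hq, hrc⟩ := Finset.mem_image.mp hv
    rw [Qs, Finset.mem_filter] at hq
    obtain ⟨_, hlt, h1j, h2j⟩ := hq
    have hkm : q.1 ≠ q.2 := ne_of_lt hlt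
    have hsne : ({q.1, q.2} : Set (Fin n)) ≠ {i, j} :=
      pair_ne_right (not_mem_pair (Ne.symm h1j) (Ne.symm h2j))
    have hB : Bc p i j q.1 q.2 ≠ 0 := Bc_ne hp hij hgp hkm hsne
    have hFs : Fq p q.1 q.2 (Xp p i j s) = Bc p i j q.1 q.2 * (s - v) := by
      rw [F_sign hp hij hgp hkm hsne, hrc]
    have hFs' : Fq p q.1 q.2 (Xp p i j s') = Bc p i j q.1 q.2 * (s' - v) := by
      rw [F_sign hp hij hgp hkm hsne, hrc]
    have hck1 := congrFun hc q.1
    have hck2 := congrFun hc q.2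
    rcases lt_or_gt_of_ne hB with hBn | hBn
    · -- B < 0 : at s, Fq > 0 (dist k < dist m); at s', Fq < 0
      have hp1 : dist (Xp p i j s) (p q.1) < dist (Xp p i j s) (p q.2) := by
        rw [dist_lt_iff, hFs]
        nlinarith
      have hp2 : dist (Xp p i j s') (p q.2) < dist (Xp p i j s') (p q.1) := by
        rw [dist_lt_iff, Fq_neg, hFs']
        nlinarith
      have hc1 := codeMono p _ _ _ hp1
      have hc2 := codeMono p _ _ _ hp2
      rw [hck1, hck2] at hc1
      linarith
    · have hp1 : dist (Xp p i j s) (p q.2) < dist (Xp p i j s) (p q.1) := by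
        rw [dist_lt_iff, Fq_neg, hFs]
        nlinarith
      have hp2 : dist (Xp p i j s') (p q.1) < dist (Xp p i j s') (p q.2) := by
        rw [dist_lt_iff, hFs']
        nlinarith
      have hc1 := codeMono p _ _ _ hp1
      have hc2 := codeMono p _ _ _ hp2
      rw [hck1, hck2] at hc1
      linarith
  intro v hv
  constructor
  · intro h
    by_contra h'
    have hvt' : v < t' := lt_of_le_of_ne (not_lt.mp h') (fun he => ht' (he ▸ hv))
    exact aux t t' ht ht' hcode v hv h hvt'
  · intro h
    by_contra h'
    have hvt : v < t := lt_of_le_of_ne (not_lt.mp h') (fun he => ht (he ▸ hv))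
    exact aux t' t ht' ht hcode.symm v hv h hvt


lemma pair_block (hp : Function.Injective p) (hij : i ≠ j) (hgp : GeneralPosition p) :
    ∃ F : Finset (Fin n → ℚ),
      {c : Fin n → ℚ | (∃ x, EdgePoint p x ∧ code p x = c) ∧ NonIntSet c = {i, j}} = ↑F ∧
      F.card = (n - 1).choose 2 + 1 := by
  classical
  have hg : ∀ q : ℕ, ∃ t : ℝ, q ≤ (Vs p i j).card → (t ∉ Vs p i j ∧ cnt (Vs p i j) t = q) := by
    intro q
    by_cases h : q ≤ (Vs p i j).card
    · obtain ⟨t, ht⟩ := exists_cnt (Vs p i j) q h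
      exact ⟨t, fun _ => ht⟩
    · exact ⟨0, fun hh => absurd hh h⟩
  choose g hgspec using hg
  have hinj : Set.InjOn (fun q => code p (Xp p i j (g q)))
      ↑(Finset.range ((Vs p i j).card + 1)) := by
    intro q hq q' hq' hfe
    rw [Finset.mem_coe, Finset.mem_range, Nat.lt_succ_iff] at hq hq'
    have h1 := hgspec q hq
    have h2 := hgspec q' hq'
    have hsides := sides_of_code_eq hp hij hgp h1.1 h2.1 hfe
    have hce := cnt_eq_of_sides h1.1 h2.1 hsides
    rw [h1.2, h2.2] at hce
    exact hce
  refine ⟨(Finset.range ((Vs p i j).card + 1)).image (fun q => code p (Xp p i j (g q))), ?_, ?_⟩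
  · ext c
    simp only [Set.mem_setOf_eq, Finset.coe_image, Set.mem_image, Finset.mem_coe,
      Finset.mem_range]
    constructor
    · rintro ⟨⟨x, hxe, hxc⟩, hni⟩
      obtain ⟨a, b, htab, hall⟩ := hxe
      have hEd : EdgeAt p x a b := ⟨htab, hall⟩
      have hpair : ({i, j} : Set (Fin n)) = {a, b} := by
        rw [← hni, ← hxc]
        exact edgeAt_nonIntSet hEd
      have hEd2 : EdgeAt p x i j := by
        rcases Set.pair_eq_pair_iff.mp hpair with ⟨h1, h2⟩ | ⟨h1, h2⟩
        · rw [h1, h2]; exact hEd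
        · rw [h1, h2]; exact edgeAt_symm hEd
      obtain ⟨t, htV, rfl⟩ := edgeAt_param hp hij hgp hEd2
      refine ⟨cnt (Vs p i j) t, Nat.lt_succ_of_le (cnt_le _ t), ?_⟩
      have hq := hgspec (cnt (Vs p i j) t) (cnt_le _ t)
      have hsides := sides_of_cnt_eq hq.1 htV hq.2
      exact (code_eq_of_sides hp hij hgp hq.1 htV hsides).trans hxc
    · rintro ⟨q, hqK, rfl⟩
      have hq := hgspec q (Nat.lt_succ_iff.mp hqK)
      have hEd := edgeAt_of_not_mem hp hij hgp hq.1
      exact ⟨⟨Xp p i j (g q), ⟨i, j, hEd.1, hEd.2⟩, rfl⟩, edgeAt_nonIntSet hEd⟩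
  · rw [Finset.card_image_of_injOn hinj, Finset.card_range, Vs_card hp hij hgp]

end Pair2

lemma arith (n : ℕ) (hn : 2 ≤ n) :
    n.choose 2 * ((n - 1).choose 2 + 1) = (n.choose 2) ^ 2 - 3 * n.choose 3 := by
  obtain ⟨m, rfl⟩ : ∃ m, n = m + 2 := ⟨n - 2, by omega⟩
  have h1 : (m + 2).choose 2 = (m + 1).choose 2 + (m + 1) := by
    rw [show m + 2 = (m + 1) + 1 from rfl, Nat.choose_succ_succ (m + 1) 1]
    simp [Nat.add_comm]
  have h2 : (m + 2).choose 3 * 3 = (m + 2).choose 2 * m := by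
    simpa using Nat.choose_succ_right_eq (m + 2) 2
  have h3 : ((m + 2).choose 2) ^ 2 =
      (m + 2).choose 2 * ((m + 1).choose 2 + 1) + 3 * (m + 2).choose 3 := by
    calc ((m + 2).choose 2) ^ 2 = (m + 2).choose 2 * ((m + 1).choose 2 + 1 + m) := by
          rw [sq, h1]; ring
    _ = (m + 2).choose 2 * ((m + 1).choose 2 + 1) + (m + 2).choose 2 * m := by ring
    _ = _ := by rw [← h2]; ring
  have hred : m + 2 - 1 = m + 1 := rfl
  rw [hred]
  exact Nat.eq_sub_of_add_eq h3.symm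

theorem edge_count' {n : ℕ} (hn : 2 ≤ n) (p : Fin n → Pt)
    (hp : Function.Injective p) (hgp : GeneralPosition p) :
    Set.ncard {c : Fin n → ℚ | ∃ x : Pt, EdgePoint p x ∧ code p x = c}
      = (n.choose 2) ^ 2 - 3 * n.choose 3 := by
  classical
  have key : ∀ s : Finset (Fin n), s ∈ (Finset.univ : Finset (Fin n)).powersetCard 2 →
      ∃ F : Finset (Fin n → ℚ),
        {c : Fin n → ℚ | (∃ x, EdgePoint p x ∧ code p x = c) ∧ NonIntSet c = ↑s} = ↑F ∧
        F.card = (n - 1).choose 2 + 1 := by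
    intro s hs
    obtain ⟨a, b, hab, rfl⟩ := Finset.card_eq_two.mp (Finset.mem_powersetCard.mp hs).2
    have hcoe : (↑({a, b} : Finset (Fin n)) : Set (Fin n)) = ({a, b} : Set (Fin n)) := by simp
    rw [hcoe]
    exact pair_block hp hab hgp
  choose! Fc hFc1 hFc2 using key
  set T := (Finset.univ : Finset (Fin n)).powersetCard 2 with hT
  have hEun : {c : Fin n → ℚ | ∃ x : Pt, EdgePoint p x ∧ code p x = c} =
      ⋃ s ∈ T, {c : Fin n → ℚ | (∃ x, EdgePoint p x ∧ code p x = c) ∧ NonIntSet c = ↑s} := by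
    ext c
    simp only [Set.mem_setOf_eq, Set.mem_iUnion, exists_prop]
    constructor
    · rintro ⟨x, hxe, hxc⟩
      obtain ⟨a, b, htab, hall⟩ := hxe
      have hEd : EdgeAt p x a b := ⟨htab, hall⟩
      refine ⟨{a, b}, ?_, ⟨x, ⟨a, b, htab, hall⟩, hxc⟩, ?_⟩
      · rw [hT, Finset.mem_powersetCard]
        refine ⟨Finset.subset_univ _, ?_⟩
        rw [Finset.card_insert_of_notMem (by simp [htab.1]), Finset.card_singleton]
      · rw [← hxc]
        simp only [Finset.coe_insert, Finset.coe_singleton]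
        exact edgeAt_nonIntSet hEd
    · rintro ⟨s, hsT, hcE, _⟩
      exact hcE
  have hdisj : ∀ s ∈ T, ∀ s' ∈ T, s ≠ s' → Disjoint (Fc s) (Fc s') := by
    intro s hs s' hs' hne
    rw [Finset.disjoint_left]
    intro c hc hc'
    have h1 : c ∈ (↑(Fc s) : Set (Fin n → ℚ)) := hc
    have h2 : c ∈ (↑(Fc s') : Set (Fin n → ℚ)) := hc'
    rw [← hFc1 s hs] at h1
    rw [← hFc1 s' hs'] at h2
    exact hne (Finset.coe_injective (h1.2.symm.trans h2.2))
  have hEeq : {c : Fin n → ℚ | ∃ x : Pt, EdgePoint p x ∧ code p x = c} =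
      ↑(T.biUnion Fc) := by
    rw [hEun, Finset.coe_biUnion]
    exact Set.iUnion₂_congr (fun s hs => hFc1 s hs)
  rw [hEeq, Set.ncard_coe_finset, Finset.card_biUnion hdisj]
  have hsum : ∑ s ∈ T, (Fc s).card = T.card * ((n - 1).choose 2 + 1) := by
    rw [Finset.sum_congr rfl (fun s hs => hFc2 s hs), Finset.sum_const, smul_eq_mul]
  rw [hsum, hT, Finset.card_powersetCard, Finset.card_univ, Fintype.card_fin]
  exact arith n hn

end OACD

/-- in general position, the number of distinct chromatic codes attained by
edge points equals `C(n,2)² − 3·C(n,3)` (the number of edges of the full-OACD). -/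
theorem edge_count {n : ℕ} (hn : 2 ≤ n) (p : Fin n → Pt)
    (hp : Function.Injective p) (hgp : GeneralPosition p) :
    Set.ncard {c : Fin n → ℚ | ∃ x : Pt, EdgePoint p x ∧ code p x = c}
      = (n.choose 2) ^ 2 - 3 * n.choose 3 :=
  OACD.edge_count' hn p hp hgp
end
end

section
/- The code of an edge is the average of the codes of the two cells on its two sides: let x be an edge point with tie {i,j}, and define c₊, c₋ : {1,…,n} → ℚ by c₊ = code(x) except c₊_i = code(x)_i + 1/2 and c₊_j = code(x)_j − 1/2, and c₋ = code(x) except c₋_i = code(x)_i − 1/2 and c₋_j = code(x)_j + 1/2. Then there exists ε₀ > 0 such that for every 0 < ε ≤ ε₀ the set of chromatic codes of cell points in the open ball B(x,ε) is exactly {c₊, c₋}; in particular code(x) = (1/2)(c₊ + c₋). -/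
noncomputable section

open Metric

/-- The code of the cell on one side of the edge through `x` with tie `{i,j}`:
it agrees with `code p x` except that the value at `i` is raised by `1/2` and the value
at `j` is lowered by `1/2`. -/
def cplus {n : ℕ} (p : Fin n → Pt) (x : Pt) (i j : Fin n) : Fin n → ℚ :=
  Function.update (Function.update (code p x) i (code p x i + 1/2)) j (code p x j - 1/2)

/-- The code of the cell on the other side of the edge through `x` with tie `{i,j}`. -/
def cminus {n : ℕ} (p : Fin n → Pt) (x : Pt) (i j : Fin n) : Fin n → ℚ :=
  Function.update (Function.update (code p x) i (code p x i - 1/2)) j (code p x j + 1/2)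

lemma pair_eq_cases {n : ℕ} {u v i j : Fin n} (huv : u ≠ v)
    (h : ({u, v} : Set (Fin n)) = {i, j}) : (u = i ∧ v = j) ∨ (u = j ∧ v = i) := by
  have hu : u ∈ ({i, j} : Set (Fin n)) := h ▸ (by simp : u ∈ ({u, v} : Set (Fin n)))
  have hv : v ∈ ({i, j} : Set (Fin n)) := h ▸ (by simp : v ∈ ({u, v} : Set (Fin n)))
  simp only [Set.mem_insert_iff, Set.mem_singleton_iff] at hu hv
  rcases hu with hu | hu <;> rcases hv with hv | hv
  · exact absurd (hu.trans hv.symm) huv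
  · exact Or.inl ⟨hu, hv⟩
  · exact Or.inr ⟨hu, hv⟩
  · exact absurd (hu.trans hv.symm) huv

lemma cell_of_ne {n : ℕ} {p : Fin n → Pt} {x y : Pt} {i j : Fin n}
    (huniq : ∀ u v, Tie p x u v → ({u, v} : Set (Fin n)) = {i, j})
    (hpers : ∀ u v : Fin n, dist x (p u) < dist x (p v) → dist y (p u) < dist y (p v))
    (hne : dist y (p i) ≠ dist y (p j)) : CellPoint p y := by
  rintro u v ⟨huv, he⟩
  rcases lt_trichotomy (dist x (p u)) (dist x (p v)) with h | h | h
  · exact absurd he (ne_of_lt (hpers u v h))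
  · rcases pair_eq_cases huv (huniq u v ⟨huv, h⟩) with ⟨rfl, rfl⟩ | ⟨rfl, rfl⟩
    · exact hne he
    · exact hne he.symm
  · exact absurd he.symm (ne_of_lt (hpers v u h))

lemma exists_pers_ball {n : ℕ} (p : Fin n → Pt) (x : Pt) :
    ∃ ε₀ > (0 : ℝ), ∀ y ∈ ball x ε₀, ∀ u v : Fin n,
      dist x (p u) < dist x (p v) → dist y (p u) < dist y (p v) := by
  have hopen : IsOpen {y : Pt | ∀ u v : Fin n,
      dist x (p u) < dist x (p v) → dist y (p u) < dist y (p v)} := by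
    have hEq : {y : Pt | ∀ u v : Fin n,
        dist x (p u) < dist x (p v) → dist y (p u) < dist y (p v)}
        = ⋂ u, ⋂ v, {y : Pt | dist x (p u) < dist x (p v) → dist y (p u) < dist y (p v)} := by
      ext y; simp [Set.mem_iInter]
    rw [hEq]
    refine isOpen_iInter_of_finite fun u => isOpen_iInter_of_finite fun v => ?_
    by_cases h : dist x (p u) < dist x (p v)
    · simpa [h] using
        isOpen_lt (continuous_id.dist continuous_const) (continuous_id.dist continuous_const)
    · simp [h]
  have hx : x ∈ {y : Pt | ∀ u v : Fin n,
      dist x (p u) < dist x (p v) → dist y (p u) < dist y (p v)} := fun u v h => h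
  obtain ⟨ε₀, hε₀, hball⟩ := Metric.isOpen_iff.1 hopen x hx
  exact ⟨ε₀, hε₀, fun y hy => hball hy⟩

lemma dist_sq_shift (x a b : Pt) (t : ℝ) (hd : dist x a = dist x b) :
    dist (x + t • (b - a)) a ^ 2 - dist (x + t • (b - a)) b ^ 2
      = 2 * t * ‖b - a‖ ^ 2 := by
  have h1 : x + t • (b - a) - a = (x - a) + t • (b - a) := by abel
  have h2 : x + t • (b - a) - b = (x - b) + t • (b - a) := by abel
  have hxy : ‖x - a‖ = ‖x - b‖ := by rw [← dist_eq_norm, ← dist_eq_norm]; exact hd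
  have hinner : (inner ℝ (x - a) (t • (b - a)) : ℝ) - (inner ℝ (x - b) (t • (b - a)) : ℝ)
      = t * ‖b - a‖ ^ 2 := by
    rw [← inner_sub_left]
    have h3 : (x - a) - (x - b) = b - a := by abel
    rw [h3, real_inner_smul_right, real_inner_self_eq_norm_sq]
  rw [dist_eq_norm, dist_eq_norm, h1, h2, norm_add_sq_real, norm_add_sq_real]
  have hxy2 : ‖x - a‖ ^ 2 = ‖x - b‖ ^ 2 := by rw [hxy]
  linarith [hinner]

lemma exists_closer {n : ℕ} (p : Fin n → Pt) (x : Pt) (i j : Fin n)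
    (hpij : p i ≠ p j) (hd : dist x (p i) = dist x (p j)) {ε : ℝ} (hε : 0 < ε) :
    ∃ y ∈ ball x ε, dist y (p j) < dist y (p i) := by
  set w := p j - p i with hwdef
  have hw0 : (0 : ℝ) < ‖w‖ := norm_pos_iff.2 (sub_ne_zero.2 (Ne.symm hpij))
  set t := ε / (2 * ‖w‖) with htdef
  have ht : 0 < t := div_pos hε (by positivity)
  refine ⟨x + t • w, ?_, ?_⟩
  · rw [mem_ball, dist_eq_norm]
    have h0 : x + t • w - x = t • w := by abel
    rw [h0, norm_smul, Real.norm_eq_abs, abs_of_pos ht]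
    have h1 : t * ‖w‖ = ε / 2 := by
      rw [htdef]; field_simp
    rw [h1]; linarith
  · have hsq := dist_sq_shift x (p i) (p j) t hd
    have hlt : dist (x + t • w) (p j) ^ 2 < dist (x + t • w) (p i) ^ 2 := by
      nlinarith [mul_pos ht (pow_pos hw0 2)]
    exact lt_of_pow_lt_pow_left₀ 2 dist_nonneg hlt

lemma code_near_edge {n : ℕ} {p : Fin n → Pt} {x y : Pt} {i j : Fin n}
    (hij : i ≠ j) (hd : dist x (p i) = dist x (p j))
    (huniq : ∀ u v, Tie p x u v → ({u, v} : Set (Fin n)) = {i, j})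
    (hpers : ∀ u v : Fin n, dist x (p u) < dist x (p v) → dist y (p u) < dist y (p v))
    (hcell : CellPoint p y) (hlt : dist y (p i) < dist y (p j)) :
    code p y = cplus p x i j := by
  have htrans : ∀ u v : Fin n, u ≠ v → ¬((u = i ∧ v = j) ∨ (u = j ∧ v = i)) →
      (dist y (p u) < dist y (p v) ↔ dist x (p u) < dist x (p v)) := by
    intro u v huv hnp
    constructor
    · intro hy
      rcases lt_trichotomy (dist x (p u)) (dist x (p v)) with h | h | h
      · exact h
      · exact absurd (pair_eq_cases huv (huniq u v ⟨huv, h⟩)) hnp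
      · exact absurd hy (not_lt.2 (le_of_lt (hpers v u h)))
    · exact hpers u v
  have hytie : ∀ k : Fin n, {l : Fin n | l ≠ k ∧ dist y (p l) = dist y (p k)} = ∅ := by
    intro k
    ext l
    simp only [Set.mem_setOf_eq, Set.mem_empty_iff_false, iff_false, not_and]
    intro hlk he
    exact hcell l k ⟨hlk, he⟩
  funext k
  by_cases hki : k = i
  · subst hki
    have hcp : cplus p x k j k = code p x k + 1/2 := by
      simp [cplus, Function.update_apply, hij]
    have hset : {l : Fin n | l ≠ k ∧ dist y (p k) < dist y (p l)}
        = insert j {l : Fin n | l ≠ k ∧ dist x (p k) < dist x (p l)} := by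
      ext l
      simp only [Set.mem_setOf_eq, Set.mem_insert_iff]
      by_cases hlj : l = j
      · subst hlj
        simp [Ne.symm hij, hlt]
      · simp only [hlj, false_or]
        constructor
        · rintro ⟨hlk, h⟩
          exact ⟨hlk, (htrans k l (fun h' => hlk h'.symm)
            (by rintro (⟨-, rfl⟩ | ⟨rfl, -⟩); exacts [hlj rfl, hij rfl])).1 h⟩
        · rintro ⟨hlk, h⟩
          exact ⟨hlk, hpers k l h⟩
    have hjS : j ∉ {l : Fin n | l ≠ k ∧ dist x (p k) < dist x (p l)} := by
      simp [hd]
    have hTx : {l : Fin n | l ≠ k ∧ dist x (p l) = dist x (p k)} = {j} := by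
      ext l
      simp only [Set.mem_setOf_eq, Set.mem_singleton_iff]
      constructor
      · rintro ⟨hlk, he⟩
        rcases pair_eq_cases hlk (huniq l k ⟨hlk, he⟩) with ⟨rfl, h2⟩ | ⟨rfl, -⟩
        · exact absurd h2 hij
        · rfl
      · rintro rfl
        exact ⟨Ne.symm hij, hd.symm⟩
    rw [hcp]; simp only [code]; rw [hytie k, hset, hTx, Set.ncard_insert_of_notMem hjS]
    push_cast [Set.ncard_empty, Set.ncard_singleton]
    ring
  · by_cases hkj : k = j
    · subst hkj
      have hcp : cplus p x i k k = code p x k - 1/2 := by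
        simp [cplus, Function.update_apply]
      have hset : {l : Fin n | l ≠ k ∧ dist y (p k) < dist y (p l)}
          = {l : Fin n | l ≠ k ∧ dist x (p k) < dist x (p l)} := by
        ext l
        simp only [Set.mem_setOf_eq]
        by_cases hli : l = i
        · subst hli
          constructor
          · rintro ⟨-, h⟩
            exact absurd h (not_lt.2 hlt.le)
          · rintro ⟨-, h⟩
            rw [hd] at h
            exact absurd h (lt_irrefl _)
        · constructor
          · rintro ⟨hlk, h⟩
            exact ⟨hlk, (htrans k l (fun h' => hlk h'.symm)
              (by rintro (⟨rfl, -⟩ | ⟨-, rfl⟩); exacts [hij rfl, hli rfl])).1 h⟩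
          · rintro ⟨hlk, h⟩
            exact ⟨hlk, hpers k l h⟩
      have hTx : {l : Fin n | l ≠ k ∧ dist x (p l) = dist x (p k)} = {i} := by
        ext l
        simp only [Set.mem_setOf_eq, Set.mem_singleton_iff]
        constructor
        · rintro ⟨hlk, he⟩
          rcases pair_eq_cases hlk (huniq l k ⟨hlk, he⟩) with ⟨rfl, -⟩ | ⟨rfl, h2⟩
          · rfl
          · exact absurd h2.symm hij
        · rintro rfl
          exact ⟨hij, hd⟩
      rw [hcp]; simp only [code]; rw [hytie k, hset, hTx]
      push_cast [Set.ncard_empty, Set.ncard_singleton]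
      ring
    · have hcp : cplus p x i j k = code p x k := by
        simp [cplus, Function.update_apply, hki, hkj]
      have hset : {l : Fin n | l ≠ k ∧ dist y (p k) < dist y (p l)}
          = {l : Fin n | l ≠ k ∧ dist x (p k) < dist x (p l)} := by
        ext l
        simp only [Set.mem_setOf_eq, and_congr_right_iff]
        intro hlk
        exact htrans k l (fun h' => hlk h'.symm)
          (by rintro (⟨rfl, -⟩ | ⟨rfl, -⟩); exacts [hki rfl, hkj rfl])
      have hTx : {l : Fin n | l ≠ k ∧ dist x (p l) = dist x (p k)} = ∅ := by
        ext l
        simp only [Set.mem_setOf_eq, Set.mem_empty_iff_false, iff_false, not_and]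
        intro hlk he
        rcases pair_eq_cases hlk (huniq l k ⟨hlk, he⟩) with ⟨-, rfl⟩ | ⟨-, rfl⟩
        · exact hkj rfl
        · exact hki rfl
      rw [hcp]; simp only [code]; rw [hytie k, hset, hTx]

/-- the code of an edge is the average of the codes of the two cells on its
two sides: for an edge point `x` with (unique) tie `{i,j}`, for all small enough balls
around `x` the chromatic codes of cell points in the ball are exactly `c₊` and `c₋`;
in particular `code x = (1/2)(c₊ + c₋)`. -/
theorem edge_is_average_of_two_cells {n : ℕ} (hn : 2 ≤ n) (p : Fin n → Pt)
    (hp : Function.Injective p) (x : Pt) (i j : Fin n)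
    (htie : Tie p x i j)
    (huniq : ∀ u v, Tie p x u v → ({u, v} : Set (Fin n)) = {i, j}) :
    (∃ ε₀ > (0 : ℝ), ∀ ε : ℝ, 0 < ε → ε ≤ ε₀ →
      {c : Fin n → ℚ | ∃ y ∈ Metric.ball x ε, CellPoint p y ∧ code p y = c} =
        ({cplus p x i j, cminus p x i j} : Set (Fin n → ℚ))) ∧
    (∀ t, code p x t = (cplus p x i j t + cminus p x i j t) / 2) := by
  obtain ⟨hij, hd⟩ := htie
  obtain ⟨ε₀, hε₀pos, hpers⟩ := exists_pers_ball p x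
  have hpij : p i ≠ p j := fun h => hij (hp h)
  have huniq' : ∀ u v, Tie p x u v → ({u, v} : Set (Fin n)) = {j, i} := by
    intro u v h; rw [huniq u v h, Set.pair_comm]
  have hcm : cplus p x j i = cminus p x i j := by
    rw [cplus, cminus, Function.update_comm hij.symm]
  constructor
  · refine ⟨ε₀, hε₀pos, fun ε hε hεle => ?_⟩
    ext c
    simp only [Set.mem_setOf_eq, Set.mem_insert_iff, Set.mem_singleton_iff]
    constructor
    · rintro ⟨y, hy, hcell, rfl⟩
      have hyp : ∀ u v : Fin n, dist x (p u) < dist x (p v) → dist y (p u) < dist y (p v) :=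
        hpers y (ball_subset_ball hεle hy)
      have hne : dist y (p i) ≠ dist y (p j) := fun he => hcell i j ⟨hij, he⟩
      rcases hne.lt_or_gt with h | h
      · exact Or.inl (code_near_edge hij hd huniq hyp hcell h)
      · exact Or.inr (by rw [← hcm]; exact code_near_edge hij.symm hd.symm huniq' hyp hcell h)
    · rintro (rfl | rfl)
      · obtain ⟨y, hy, hlt⟩ := exists_closer p x j i hpij.symm hd.symm hε
        have hyp : ∀ u v : Fin n, dist x (p u) < dist x (p v) → dist y (p u) < dist y (p v) :=
          hpers y (ball_subset_ball hεle hy)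
        have hcell := cell_of_ne huniq hyp (ne_of_lt hlt)
        exact ⟨y, hy, hcell, code_near_edge hij hd huniq hyp hcell hlt⟩
      · obtain ⟨y, hy, hlt⟩ := exists_closer p x i j hpij hd hε
        have hyp : ∀ u v : Fin n, dist x (p u) < dist x (p v) → dist y (p u) < dist y (p v) :=
          hpers y (ball_subset_ball hεle hy)
        have hcell := cell_of_ne huniq hyp (ne_of_gt hlt)
        exact ⟨y, hy, hcell, by
          rw [← hcm]; exact code_near_edge hij.symm hd.symm huniq' hyp hcell hlt⟩
  · intro t
    by_cases htj : t = j
    · subst htj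
      simp only [cplus, cminus, Function.update_self]
      ring
    · by_cases hti : t = i
      · subst hti
        simp only [cplus, cminus, Function.update_apply, if_neg htj, if_pos rfl, eq_self_iff_true, if_true]
        ring
      · simp only [cplus, cminus, Function.update_apply, if_neg htj, if_neg hti]
        ring
end
end
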